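/- arXiv:2108.09520 — 7 statements merged into one kernel-verified Lean document; each statement's English description precedes it below -/
import Mathlib

section
/- Let α > 1 and 0 < L ≤ U. There exists a constant C > 0, depending only on α, L and U (and not on p or ξ), such that for every p ≥ 1 and every vector ξ ∈ R^p whose descending rearrangement |ξ_{(1)}| ≥ |ξ_{(2)}| ≥ … ≥ |ξ_{(p)}| satisfies L j^{−α} ≤ |ξ_{(j)}| ≤ U j^{−α} for every 1 ≤ j ≤ p, and for every subset J ⊆ {1, …, p}, one has ‖ξ(J)‖₁ ≤ C ( ‖ξ(J)‖₂² )^{(α−1)/(2α−1)}, where ξ(J) = (ξ_j)_{j ∈ J}. -/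
open Finset

open Real


lemma tele {α : ℝ} (hα : 1 < α) {x : ℝ} (hx : 1 ≤ x) :
    (α - 1) * (x+1) ^ (-α) + (x+1) ^ ((1:ℝ)-α) ≤ x ^ ((1:ℝ)-α) := by
  have hx0 : (0:ℝ) < x := lt_of_lt_of_le one_pos hx
  have hx1 : (0:ℝ) < x + 1 := by linarith
  have hA : (0:ℝ) < (x+1) ^ α := Real.rpow_pos_of_pos hx1 _
  have hB : (0:ℝ) < x ^ α := Real.rpow_pos_of_pos hx0 _
  have hb : 1 + α * (1/x) ≤ (1 + 1/x) ^ α :=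
    one_add_mul_self_le_rpow_one_add (by have := (one_div_pos.mpr hx0).le; linarith) hα.le
  have h1 : (1:ℝ) + 1/x = (x + 1)/x := by field_simp
  have h2 : ((x+1)/x) ^ α = (x+1)^α / x^α := Real.div_rpow hx1.le hx0.le α
  have key : (x + α) * x ^ α ≤ x * (x+1) ^ α := by
    rw [h1, h2] at hb
    have hb' : (x + α)/x ≤ (x+1)^α / x^α := by
      have : (x + α)/x = 1 + α * (1/x) := by field_simp
      rw [this]; exact hb
    have := (div_le_div_iff₀ hx0 hB).mp hb'
    nlinarith [this]
  have e1 : (x+1) ^ (-α) = ((x+1)^α)⁻¹ := by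
    rw [Real.rpow_neg hx1.le]
  have e2 : (x+1) ^ ((1:ℝ)-α) = (x+1) / (x+1)^α := by
    rw [Real.rpow_sub hx1, Real.rpow_one]
  have e3 : x ^ ((1:ℝ)-α) = x / x^α := by
    rw [Real.rpow_sub hx0, Real.rpow_one]
  rw [e1, e2, e3]
  have e4 : (α - 1) * ((x+1)^α)⁻¹ + (x+1) / (x+1)^α = (x + α) / (x+1)^α := by
    field_simp; ring
  rw [e4, div_le_div_iff₀ hA hB]
  nlinarith [key]

lemma sum_tail {α : ℝ} (hα : 1 < α) (m : ℕ) (M : ℕ) :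
    ∑ k ∈ Finset.Icc (m+1) M, ((k:ℝ)+1) ^ (-α) ≤ ((m:ℝ)+1) ^ ((1:ℝ)-α) / (α-1) := by
  have hα1 : (0:ℝ) < α - 1 := by linarith
  rcases le_or_gt M m with h | h
  · rw [Finset.Icc_eq_empty (by omega)]
    simp
    positivity
  · have key : ∀ N : ℕ, m ≤ N →
        ∑ k ∈ Finset.Icc (m+1) N, ((k:ℝ)+1) ^ (-α)
          ≤ ((m:ℝ)+1) ^ ((1:ℝ)-α) / (α-1) - ((N:ℝ)+1) ^ ((1:ℝ)-α) / (α-1) := by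
      intro N hN
      induction N, hN using Nat.le_induction with
      | base => rw [Finset.Icc_eq_empty (by omega)]; simp
      | succ N hmN ih =>
        rw [Finset.sum_Icc_succ_top (by omega)]
        have hx : (1:ℝ) ≤ (N:ℝ) + 1 := by
          have : (0:ℝ) ≤ (N:ℝ) := Nat.cast_nonneg N
          linarith
        have ht := tele hα hx
        have hcast : ((N+1 : ℕ):ℝ) = (N:ℝ) + 1 := by push_cast; ring
        rw [hcast]
        have : ((N:ℝ) + 1 + 1) ^ (-α) ≤ ((N:ℝ)+1) ^ ((1:ℝ)-α) / (α-1)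
            - ((N:ℝ)+1+1) ^ ((1:ℝ)-α) / (α-1) := by
          rw [div_sub_div_same, le_div_iff₀ hα1]
          linarith
        linarith
    have := key M h.le
    have hpos : (0:ℝ) ≤ ((M:ℝ)+1) ^ ((1:ℝ)-α) / (α-1) := by positivity
    linarith

lemma sum_ranks {α : ℝ} (hα : 1 < α) {R : ℝ} (hR : 0 < R) (S : Finset ℕ)
    (hS : ∀ s ∈ S, R ≤ (s:ℝ)+1) :
    ∑ s ∈ S, ((s:ℝ)+1) ^ (-α) ≤ (α/(α-1)) * R ^ ((1:ℝ)-α) := by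
  have hα1 : (0:ℝ) < α - 1 := by linarith
  have hα0 : (0:ℝ) < α := by linarith
  rcases S.eq_empty_or_nonempty with rfl | hne
  · simp; positivity
  · set m := S.min' hne with hm
    set M := S.max' hne with hM
    have hmem := S.min'_mem hne
    have hm1 : (0:ℝ) < (m:ℝ) + 1 := by positivity
    have hsub : S ⊆ Finset.Icc m M := fun s hs =>
      Finset.mem_Icc.mpr ⟨S.min'_le s hs, S.le_max' s hs⟩
    have h1 : ∑ s ∈ S, ((s:ℝ)+1) ^ (-α) ≤ ∑ k ∈ Finset.Icc m M, ((k:ℝ)+1) ^ (-α) :=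
      Finset.sum_le_sum_of_subset_of_nonneg hsub (fun k _ _ => by positivity)
    have hmM : m ≤ M := S.min'_le _ (S.max'_mem hne)
    have hsplit : Finset.Icc m M = insert m (Finset.Icc (m+1) M) := by
      rw [Finset.Icc_add_one_left_eq_Ioc, Finset.Ioc_insert_left hmM]
    have h2 : ∑ k ∈ Finset.Icc m M, ((k:ℝ)+1) ^ (-α)
        = ((m:ℝ)+1) ^ (-α) + ∑ k ∈ Finset.Icc (m+1) M, ((k:ℝ)+1) ^ (-α) := by
      rw [hsplit, Finset.sum_insert (by simp)]
    have h3 := sum_tail hα m M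
    -- (m+1)^{-α} ≤ (m+1)^{1-α}
    have h4 : ((m:ℝ)+1) ^ (-α) ≤ ((m:ℝ)+1) ^ ((1:ℝ)-α) :=
      Real.rpow_le_rpow_of_exponent_le
        (by have := Nat.cast_nonneg (α := ℝ) m; linarith) (by linarith)
    have h5 : ((m:ℝ)+1) ^ ((1:ℝ)-α) ≤ R ^ ((1:ℝ)-α) :=
      Real.rpow_le_rpow_of_nonpos hR (hS m hmem) (by linarith)
    have h6 : ∑ s ∈ S, ((s:ℝ)+1) ^ (-α) ≤ ((m:ℝ)+1) ^ ((1:ℝ)-α) * (1 + 1/(α-1)) := by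
      rw [h2] at h1
      have : ∑ k ∈ Finset.Icc (m+1) M, ((k:ℝ)+1) ^ (-α)
          ≤ ((m:ℝ)+1) ^ ((1:ℝ)-α) / (α-1) := h3
      calc ∑ s ∈ S, ((s:ℝ)+1) ^ (-α)
          ≤ ((m:ℝ)+1) ^ (-α) + ((m:ℝ)+1) ^ ((1:ℝ)-α) / (α-1) := by linarith
        _ ≤ ((m:ℝ)+1) ^ ((1:ℝ)-α) * (1 + 1/(α-1)) := by
            rw [mul_add, mul_one, mul_one_div]; linarith
    have hc : (1:ℝ) + 1/(α-1) = α/(α-1) := by field_simp; ring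
    rw [hc] at h6
    calc ∑ s ∈ S, ((s:ℝ)+1) ^ (-α)
        ≤ ((m:ℝ)+1) ^ ((1:ℝ)-α) * (α/(α-1)) := h6
      _ ≤ R ^ ((1:ℝ)-α) * (α/(α-1)) := by
          apply mul_le_mul_of_nonneg_right h5; positivity
      _ = (α/(α-1)) * R ^ ((1:ℝ)-α) := by ring

/-- Two-sided polynomial decay of the ordered magnitudes implies the polynomial-decay
class condition of Assumption 3(a): there is `C > 0`, depending only on `α, L, U`,
such that any `ξ ∈ ℝ^p` whose descending rearrangement satisfies
`L j^{−α} ≤ |ξ_{(j)}| ≤ U j^{−α}` obeys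
`‖ξ(J)‖₁ ≤ C (‖ξ(J)‖₂²)^{(α−1)/(2α−1)}` for every `J ⊆ {1, …, p}`. -/
theorem stmt_6 (α L U : ℝ) (hα : 1 < α) (hL : 0 < L) (hLU : L ≤ U) :
    ∃ C : ℝ, 0 < C ∧
      ∀ (p : ℕ), 1 ≤ p →
      ∀ (ξ : Fin p → ℝ) (e : Fin p ≃ Fin p),
        (∀ j k : Fin p, j ≤ k → |ξ (e k)| ≤ |ξ (e j)|) →
        (∀ j : Fin p,
          L * ((j : ℝ) + 1) ^ (-α) ≤ |ξ (e j)| ∧ |ξ (e j)| ≤ U * ((j : ℝ) + 1) ^ (-α)) →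
        ∀ J : Finset (Fin p),
          ∑ j ∈ J, |ξ j| ≤ C * (∑ j ∈ J, (ξ j) ^ 2) ^ ((α - 1) / (2 * α - 1)) := by
  have hα1 : (0:ℝ) < α - 1 := by linarith
  have hα0 : (0:ℝ) < α := by linarith
  have h2α : (0:ℝ) < 2*α - 1 := by linarith
  set θ : ℝ := (α - 1) / (2 * α - 1) with hθ
  have hθpos : 0 < θ := by positivity
  have hU : (0:ℝ) < U := lt_of_lt_of_le hL hLU
  set K : ℝ := U * (α/(α-1)) * L ^ (((1:ℝ)-α)/α) with hK
  have hKpos : 0 < K := by positivity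
  refine ⟨1 + K, by linarith, ?_⟩
  intro p hp ξ e _hmono hb J
  rcases J.eq_empty_or_nonempty with rfl | hJ
  · simp [Real.zero_rpow hθpos.ne']
  set S2 : ℝ := ∑ j ∈ J, (ξ j) ^ 2 with hS2def
  have hS2 : 0 < S2 := by
    obtain ⟨j0, hj0⟩ := hJ
    apply Finset.sum_pos' (fun i _ => sq_nonneg _) ⟨j0, hj0, ?_⟩
    have h1 := (hb (e.symm j0)).1
    rw [Equiv.apply_symm_apply] at h1
    have hpos : 0 < |ξ j0| := lt_of_lt_of_le (by positivity) h1
    rw [← sq_abs]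
    positivity
  set t : ℝ := S2 ^ (α/(2*α-1)) with ht
  have htpos : 0 < t := Real.rpow_pos_of_pos hS2 _
  -- key exponent identities
  have hS2div : S2 / t = S2 ^ θ := by
    rw [ht, hθ]
    nth_rewrite 1 [← Real.rpow_one S2]
    rw [← Real.rpow_sub hS2]
    congr 1
    rw [eq_div_iff h2α.ne', sub_mul, div_mul_cancel₀ _ h2α.ne']
    ring
  -- split the sum
  rw [← Finset.sum_filter_add_sum_filter_not J (fun j => t < |ξ j|)]
  -- big part
  have hbig : ∑ j ∈ J.filter (fun j => t < |ξ j|), |ξ j| ≤ S2 ^ θ := by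
    rw [← hS2div]
    calc ∑ j ∈ J.filter (fun j => t < |ξ j|), |ξ j|
        ≤ ∑ j ∈ J.filter (fun j => t < |ξ j|), (ξ j)^2 / t := by
          apply Finset.sum_le_sum
          intro j hj
          have hjt := (Finset.mem_filter.mp hj).2
          rw [le_div_iff₀ htpos]
          have : t * |ξ j| ≤ |ξ j| * |ξ j| :=
            mul_le_mul_of_nonneg_right hjt.le (abs_nonneg _)
          calc |ξ j| * t = t * |ξ j| := by ring
            _ ≤ |ξ j| * |ξ j| := this
            _ = (ξ j)^2 := by rw [abs_mul_abs_self]; ring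
      _ = (∑ j ∈ J.filter (fun j => t < |ξ j|), (ξ j)^2) / t := by
          rw [Finset.sum_div]
      _ ≤ S2 / t := by
          gcongr
          exact Finset.sum_le_sum_of_subset_of_nonneg (Finset.filter_subset _ _)
            (fun i _ _ => sq_nonneg _)
  -- small part
  have hsmall : ∑ j ∈ J.filter (fun j => ¬ t < |ξ j|), |ξ j| ≤ K * S2 ^ θ := by
    set F := J.filter (fun j => ¬ t < |ξ j|) with hF
    set g : Fin p → ℕ := fun j => ((e.symm j : Fin p) : ℕ) with hg
    set R : ℝ := (L / t) ^ (α⁻¹) with hR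
    have hLt : (0:ℝ) < L / t := div_pos hL htpos
    have hRpos : 0 < R := Real.rpow_pos_of_pos hLt _
    have hup : ∀ j ∈ F, |ξ j| ≤ U * ((g j : ℝ)+1) ^ (-α) := by
      intro j _
      have h2 := (hb (e.symm j)).2
      rwa [Equiv.apply_symm_apply] at h2
    have hlo : ∀ j ∈ F, R ≤ (g j : ℝ) + 1 := by
      intro j hj
      have h1 := (hb (e.symm j)).1
      rw [Equiv.apply_symm_apply] at h1
      have hjt : |ξ j| ≤ t := not_lt.mp (Finset.mem_filter.mp hj).2
      set y : ℝ := (g j : ℝ) + 1 with hy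
      have hy0 : (0:ℝ) < y := by positivity
      have hyα : (0:ℝ) < y ^ α := Real.rpow_pos_of_pos hy0 _
      have h2 : L * (y^α)⁻¹ ≤ t := by
        rw [← Real.rpow_neg hy0.le]
        exact le_trans h1 hjt
      have h3 : L / t ≤ y ^ α := by
        rw [div_le_iff₀ htpos] at *
        rw [mul_inv_le_iff₀ hyα] at h2
        linarith [h2]
      have h4 : R ≤ (y^α) ^ (α⁻¹) := Real.rpow_le_rpow hLt.le h3 (by positivity)
      rwa [Real.rpow_rpow_inv hy0.le hα0.ne'] at h4
    have hRexp : R ^ ((1:ℝ)-α) = L ^ (((1:ℝ)-α)/α) * S2 ^ θ := by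
      rw [hR, ← Real.rpow_mul hLt.le,
        show α⁻¹ * ((1:ℝ)-α) = ((1:ℝ)-α)/α from by ring,
        Real.div_rpow hL.le htpos.le, ht, ← Real.rpow_mul hS2.le,
        show α / (2*α-1) * (((1:ℝ)-α)/α) = -θ from by rw [hθ]; field_simp; ring,
        Real.rpow_neg hS2.le]
      rw [div_eq_mul_inv, inv_inv]
    calc ∑ j ∈ F, |ξ j|
        ≤ ∑ j ∈ F, U * ((g j : ℝ)+1) ^ (-α) := Finset.sum_le_sum hup
      _ = U * ∑ j ∈ F, ((g j : ℝ)+1) ^ (-α) := by rw [Finset.mul_sum]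
      _ = U * ∑ s ∈ F.image g, ((s:ℝ)+1) ^ (-α) := by
          rw [Finset.sum_image (fun a _ b _ hab => e.symm.injective (Fin.val_injective hab))]
      _ ≤ U * ((α/(α-1)) * R ^ ((1:ℝ)-α)) := by
          apply mul_le_mul_of_nonneg_left ?_ hU.le
          apply sum_ranks hα hRpos
          intro s hs
          obtain ⟨j, hj, rfl⟩ := Finset.mem_image.mp hs
          exact hlo j hj
      _ = K * S2 ^ θ := by rw [hRexp, hK]; ring
  calc ∑ j ∈ J.filter (fun j => t < |ξ j|), |ξ j|
        + ∑ j ∈ J.filter (fun j => ¬ t < |ξ j|), |ξ j|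
      ≤ S2 ^ θ + K * S2 ^ θ := add_le_add hbig hsmall
    _ = (1 + K) * S2 ^ θ := by ring
end

section
/- Let α > 1 and M > 0. There exists a constant C > 0, depending only on α and M (and not on p or ξ), such that for every p ≥ 1 and every vector ξ ∈ R^p with Σ_{j=1}^p |ξ_j|^{1/α} ≤ M, and for every subset J ⊆ {1, …, p}, one has ‖ξ(J)‖₁ ≤ C ( ‖ξ(J)‖₂² )^{(α−1)/(2α−1)}, where ξ(J) = (ξ_j)_{j ∈ J}. -/
open Finset

/-- Polynomial summability is a special case of the polynomial-decay class condition: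
for `α > 1` and `M > 0` there is `C > 0`, depending only on `α, M`, such that any
`ξ ∈ ℝ^p` with `∑ⱼ |ξⱼ|^{1/α} ≤ M` obeys
`‖ξ(J)‖₁ ≤ C (‖ξ(J)‖₂²)^{(α−1)/(2α−1)}` for every `J ⊆ {1, …, p}`. -/
theorem stmt_7 (α M : ℝ) (hα : 1 < α) (hM : 0 < M) :
    ∃ C : ℝ, 0 < C ∧
      ∀ (p : ℕ), 1 ≤ p →
      ∀ ξ : Fin p → ℝ,
        (∑ j : Fin p, |ξ j| ^ (1 / α)) ≤ M →
        ∀ J : Finset (Fin p),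
          ∑ j ∈ J, |ξ j| ≤ C * (∑ j ∈ J, (ξ j) ^ 2) ^ ((α - 1) / (2 * α - 1)) := by
  have hα0 : (0:ℝ) < α := by linarith
  have ha : (0:ℝ) < 2 * α - 1 := by linarith
  have ha1 : (0:ℝ) < α - 1 := by linarith
  refine ⟨M ^ (α / (2 * α - 1)), Real.rpow_pos_of_pos hM _, ?_⟩
  intro p hp ξ hξ J
  set a : ℝ := 2 * α - 1 with ha_def
  have hconj : Real.HolderConjugate (a / α) (a / (α - 1)) := by
    refine ⟨?_, div_pos ha hα0, div_pos ha ha1⟩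
    rw [inv_div, inv_div, inv_one, ← add_div, div_eq_one_iff_eq ha.ne', ha_def]; ring
  have key := Real.inner_le_Lp_mul_Lq_of_nonneg J hconj
    (f := fun j => |ξ j| ^ ((1:ℝ) / a)) (g := fun j => |ξ j| ^ (2 * (α - 1) / a))
    (fun i _ => Real.rpow_nonneg (abs_nonneg _) _)
    (fun i _ => Real.rpow_nonneg (abs_nonneg _) _)
  have h1 : ∀ j : Fin p, |ξ j| ^ ((1:ℝ) / a) * |ξ j| ^ (2 * (α - 1) / a) = |ξ j| := by
    intro j
    rw [← Real.rpow_add_of_nonneg (abs_nonneg _) (by positivity) (by positivity)]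
    have : (1:ℝ) / a + 2 * (α - 1) / a = 1 := by field_simp; ring
    rw [this, Real.rpow_one]
  have h2 : ∀ j : Fin p, (|ξ j| ^ ((1:ℝ) / a)) ^ (a / α) = |ξ j| ^ (1 / α) := by
    intro j
    rw [← Real.rpow_mul (abs_nonneg _)]
    congr 1
    field_simp
  have h3 : ∀ j : Fin p, (|ξ j| ^ (2 * (α - 1) / a)) ^ (a / (α - 1)) = (ξ j) ^ 2 := by
    intro j
    rw [← Real.rpow_mul (abs_nonneg _)]
    have : 2 * (α - 1) / a * (a / (α - 1)) = 2 := by field_simp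
    rw [this, Real.rpow_two, sq_abs]
  simp only [h1, h2, h3] at key
  have hsub : ∑ j ∈ J, |ξ j| ^ (1 / α) ≤ M :=
    le_trans (Finset.sum_le_sum_of_subset_of_nonneg (Finset.subset_univ J)
      (fun i _ _ => Real.rpow_nonneg (abs_nonneg _) _)) hξ
  have hinv1 : 1 / (a / α) = α / a := by rw [one_div_div]
  have hinv2 : 1 / (a / (α - 1)) = (α - 1) / a := by rw [one_div_div]
  rw [hinv1, hinv2] at key
  refine le_trans key (mul_le_mul_of_nonneg_right ?_ (Real.rpow_nonneg
    (Finset.sum_nonneg fun i _ => sq_nonneg _) _))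
  exact Real.rpow_le_rpow (Finset.sum_nonneg fun i _ =>
    Real.rpow_nonneg (abs_nonneg _) _) hsub (by positivity)
end

section
/- Let α' > 0 and 0 < L' ≤ U'. There exists a constant C₁ > 1, depending only on α', L' and U' (and not on p or ξ), such that for every p ≥ 1 and every vector ξ ∈ R^p whose descending rearrangement |ξ_{(1)}| ≥ |ξ_{(2)}| ≥ … ≥ |ξ_{(p)}| satisfies L' exp(−α' j) ≤ |ξ_{(j)}| ≤ U' exp(−α' j) for every 1 ≤ j ≤ p, and for every nonempty subset J ⊆ {1, …, p}, one has ‖ξ(J)‖₁ ≤ C₁ ‖ξ(J)‖_∞, where ξ(J) = (ξ_j)_{j ∈ J}. -/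
open Finset

/-- Two-sided exponential decay of the ordered magnitudes implies the
exponential-decay class condition of Assumption 3(b): there is `C₁ > 1`, depending
only on `α', L', U'`, such that any `ξ ∈ ℝ^p` whose descending rearrangement
satisfies `L' exp(−α' j) ≤ |ξ_{(j)}| ≤ U' exp(−α' j)` obeys
`‖ξ(J)‖₁ ≤ C₁ ‖ξ(J)‖_∞` for every nonempty `J ⊆ {1, …, p}`. -/
theorem stmt_8 (α' L' U' : ℝ) (hα' : 0 < α') (hL' : 0 < L') (hLU : L' ≤ U') :
    ∃ C₁ : ℝ, 1 < C₁ ∧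
      ∀ (p : ℕ), 1 ≤ p →
      ∀ (ξ : Fin p → ℝ) (e : Fin p ≃ Fin p),
        (∀ j k : Fin p, j ≤ k → |ξ (e k)| ≤ |ξ (e j)|) →
        (∀ j : Fin p,
          L' * Real.exp (-(α' * ((j : ℝ) + 1))) ≤ |ξ (e j)| ∧
            |ξ (e j)| ≤ U' * Real.exp (-(α' * ((j : ℝ) + 1)))) →
        ∀ (J : Finset (Fin p)) (hJ : J.Nonempty),
          ∑ j ∈ J, |ξ j| ≤ C₁ * J.sup' hJ (fun j => |ξ j|) := by
  set q : ℝ := Real.exp (-α') with hqdef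
  have hq0 : 0 < q := Real.exp_pos _
  have hq1 : q < 1 := Real.exp_lt_one_iff.mpr (by linarith)
  have h1q : 0 < 1 - q := by linarith
  set D : ℝ := U' / (L' * (1 - q)) with hDdef
  have hD0 : 0 < D := div_pos (by linarith) (mul_pos hL' h1q)
  refine ⟨D + 1, by linarith, ?_⟩
  intro p hp ξ e hmono hbd J hJ
  set J' : Finset (Fin p) := J.image e.symm with hJ'def
  have hJ'ne : J'.Nonempty := hJ.image _
  set m : Fin p := J'.min' hJ'ne with hmdef
  have hmJ' : m ∈ J' := J'.min'_mem hJ'ne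
  obtain ⟨j₀, hj₀J, hj₀⟩ := Finset.mem_image.mp hmJ'
  have hemJ : e m ∈ J := by rw [← hj₀]; simpa using hj₀J
  -- sup bound
  have hsupm : |ξ (e m)| ≤ J.sup' hJ (fun j => |ξ j|) := by
    exact Finset.le_sup' (fun j => |ξ j|) hemJ
  have hsup : L' * Real.exp (-(α' * ((m : ℝ) + 1))) ≤ J.sup' hJ (fun j => |ξ j|) :=
    le_trans (hbd m).1 hsupm
  -- sum rewrite
  have hsum_eq : ∑ j ∈ J, |ξ j| = ∑ r ∈ J', |ξ (e r)| := by
    rw [hJ'def, Finset.sum_image (by intro a _ b _ h; exact e.symm.injective h)]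
    simp
  -- key exp identity
  have hexp : ∀ r ∈ J', Real.exp (-(α' * ((r : ℝ) + 1)))
      = Real.exp (-(α' * ((m : ℝ) + 1))) * q ^ ((r : ℕ) - (m : ℕ)) := by
    intro r hr
    have hmr : (m : ℕ) ≤ (r : ℕ) := J'.min'_le r hr
    have hcast : ((((r : ℕ) - (m : ℕ) : ℕ)) : ℝ) = (r : ℝ) - (m : ℝ) := by
      push_cast [Nat.cast_sub hmr]; ring
    rw [← Real.exp_nat_mul, ← Real.exp_add, hcast]
    ring_nf
  have hgeom : ∑ r ∈ J', q ^ ((r : ℕ) - (m : ℕ)) ≤ (1 - q)⁻¹ := by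
    have hinj : Set.InjOn (fun r : Fin p => (r : ℕ) - (m : ℕ)) J' := by
      intro a ha b hb hab
      have hma : (m : ℕ) ≤ (a : ℕ) := J'.min'_le a ha
      have hmb : (m : ℕ) ≤ (b : ℕ) := J'.min'_le b hb
      have hab' : (a : ℕ) - (m : ℕ) = (b : ℕ) - (m : ℕ) := hab
      have : (a : ℕ) = (b : ℕ) := by omega
      exact Fin.ext this
    calc ∑ r ∈ J', q ^ ((r : ℕ) - (m : ℕ))
        = ∑ i ∈ J'.image (fun r : Fin p => (r : ℕ) - (m : ℕ)), q ^ i := by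
          rw [Finset.sum_image (fun a ha b hb h => hinj ha hb h)]
      _ ≤ ∑ i ∈ Finset.range p, q ^ i := by
          apply Finset.sum_le_sum_of_subset_of_nonneg
          · intro i hi
            obtain ⟨r, hr, hri⟩ := Finset.mem_image.mp hi
            have hri' : (r : ℕ) - (m : ℕ) = i := hri
            have hrp : (r : ℕ) < p := r.isLt
            exact Finset.mem_range.mpr (by omega)
          · intro i _ _; positivity
      _ ≤ (1 - q)⁻¹ := by
          rw [geom_sum_eq (ne_of_lt hq1)]
          have hpow : 0 ≤ q ^ p := by positivity
          have hpow1 : q ^ p ≤ 1 := pow_le_one₀ hq0.le hq1.le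
          rw [div_le_iff_of_neg (by linarith : q - 1 < 0)]
          have hone : (1 - q)⁻¹ * (q - 1) = -1 := by field_simp; ring
          rw [hone]; linarith
  set E : ℝ := Real.exp (-(α' * ((m : ℝ) + 1))) with hEdef
  have hE0 : 0 < E := Real.exp_pos _
  have hsum_le : ∑ j ∈ J, |ξ j| ≤ U' * (E * (1 - q)⁻¹) := by
    rw [hsum_eq]
    calc ∑ r ∈ J', |ξ (e r)| ≤ ∑ r ∈ J', U' * (E * q ^ ((r : ℕ) - (m : ℕ))) := by
          apply Finset.sum_le_sum
          intro r hr
          have := (hbd r).2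
          rwa [hexp r hr] at this
      _ = U' * (E * ∑ r ∈ J', q ^ ((r : ℕ) - (m : ℕ))) := by
          rw [Finset.mul_sum, Finset.mul_sum]
      _ ≤ U' * (E * (1 - q)⁻¹) := by
          apply mul_le_mul_of_nonneg_left _ (by linarith)
          exact mul_le_mul_of_nonneg_left hgeom (le_of_lt hE0)
  have hsup0 : 0 ≤ J.sup' hJ (fun j => |ξ j|) := le_trans (abs_nonneg _) hsupm
  have hkey : U' * (E * (1 - q)⁻¹) = D * (L' * E) := by
    rw [hDdef]; field_simp
  calc ∑ j ∈ J, |ξ j| ≤ D * (L' * E) := by rw [← hkey]; exact hsum_le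
    _ ≤ D * J.sup' hJ (fun j => |ξ j|) := mul_le_mul_of_nonneg_left hsup hD0.le
    _ ≤ (D + 1) * J.sup' hJ (fun j => |ξ j|) := by nlinarith
end

section
/- Let X = (X_1, …, X_p) be a square-integrable random vector in R^p with λ_min(E[X X']) ≥ λ₁ > 0 and max_{1≤j≤p} E[X_j²] ≤ σ̄² for some σ̄ > 0. Let α > 1 and C_α > 0, and let β ∈ R^p satisfy the polynomial-decay class condition: ‖β(J)‖₁ ≤ C_α (‖β(J)‖₂²)^{(α−1)/(2α−1)} for every J ⊆ {1, …, p}. Set D = Σ_{j=1}^p β_j X_j, fix J ⊆ {1, …, p}, and let V = D − P_J D, where P_J is the orthogonal projection in L² onto span{X_j : j ∈ J}. Then, with σ_j = √(E[X_j²]), E[V²] ≤ ( σ̄ C_α max_{1≤j≤p} |E[V X_j]| / σ_j )^{2 − 1/α} · λ₁^{−1 + 1/α}. -/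
open MeasureTheory ProbabilityTheory Finset

/-- Display (2.25) in the proof of Theorem 2: under the eigenvalue lower bound
`λ_min(E[XX']) ≥ λ₁ > 0`, the second-moment bound `maxⱼ E[Xⱼ²] ≤ σ̄²`, and the
polynomial-decay class condition on `β`, the residual `V = D − P_J D` of the `L²`
projection of `D = ∑ⱼ βⱼ Xⱼ` onto `span{Xⱼ : j ∈ J}` satisfies
`E[V²] ≤ (σ̄ C_α maxⱼ |E[V Xⱼ]|/σⱼ)^{2 − 1/α} λ₁^{−1 + 1/α}`. -/
theorem stmt_13 (p : ℕ)
    (Ω : Type*) [MeasurableSpace Ω] (μ : Measure Ω) [IsProbabilityMeasure μ]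
    (X : Fin p → Ω → ℝ) (hX : ∀ j, MemLp (X j) 2 μ)
    (Γ : Matrix (Fin p) (Fin p) ℝ)
    (hΓdef : ∀ j k, Γ j k = ∫ ω, X j ω * X k ω ∂μ)
    (hΓ : Γ.IsHermitian)
    (lam₁ : ℝ) (hlam₁ : 0 < lam₁) (hmin : lam₁ ≤ ⨅ i, hΓ.eigenvalues i)
    (σbar : ℝ) (hσbar : 0 < σbar)
    (hsecond : ∀ j, ∫ ω, (X j ω) ^ 2 ∂μ ≤ σbar ^ 2)
    (α Cα : ℝ) (hα : 1 < α) (hCα : 0 < Cα)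
    (β : Fin p → ℝ)
    (hclass : ∀ J : Finset (Fin p),
      ∑ j ∈ J, |β j| ≤ Cα * (∑ j ∈ J, (β j) ^ 2) ^ ((α - 1) / (2 * α - 1)))
    (D : Ω → ℝ) (hD : ∀ ω, D ω = ∑ j : Fin p, β j * X j ω)
    (J : Finset (Fin p)) (V : Ω → ℝ)
    (σ : Fin p → ℝ) (hσ : ∀ j, σ j = Real.sqrt (∫ ω, (X j ω) ^ 2 ∂μ))
    (hVspan : ∃ c : Fin p → ℝ, ∀ ω, V ω = D ω - ∑ j ∈ J, c j * X j ω)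
    (hVorth : ∀ j ∈ J, ∫ ω, V ω * X j ω ∂μ = 0) :
    ∫ ω, (V ω) ^ 2 ∂μ
      ≤ (σbar * Cα * ⨆ j : Fin p, |∫ ω, V ω * X j ω ∂μ| / σ j) ^ (2 - 1 / α)
          * lam₁ ^ (-1 + 1 / α) := by
  classical
  obtain ⟨c, hc⟩ := hVspan
  -- product integrability
  have key : ∀ (f g : Ω → ℝ), MemLp f 2 μ → MemLp g 2 μ →
      Integrable (fun ω => f ω * g ω) μ := by
    intro f g hf hg
    have h : MemLp (g • f) 1 μ :=
      hf.smul hg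
    rw [memLp_one_iff_integrable] at h
    exact (by simpa [Pi.smul_apply, smul_eq_mul, mul_comm] using h : Integrable (f * g) μ)
  set γ : Fin p → ℝ := fun j => β j - if j ∈ J then c j else 0 with hγdef
  have hγJ : ∀ j ∉ J, γ j = β j := by
    intro j hj; simp only [hγdef, if_neg hj, sub_zero]
  have hVγ : ∀ ω, V ω = ∑ j : Fin p, γ j * X j ω := by
    intro ω
    have h1 : ∑ j ∈ J, c j * X j ω
        = ∑ j : Fin p, (if j ∈ J then c j else 0) * X j ω := by
      rw [← Finset.sum_subset (Finset.subset_univ J)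
        (fun j _ hj => by rw [if_neg hj, zero_mul])]
      exact Finset.sum_congr rfl fun j hj => by rw [if_pos hj]
    rw [hc, hD, h1, ← Finset.sum_sub_distrib]
    exact Finset.sum_congr rfl fun j _ => by rw [hγdef]; ring
  have hVmem : MemLp V 2 μ :=
    MemLp.ae_eq (Filter.EventuallyEq.of_eq (funext hVγ).symm)
      (memLp_finset_sum _ fun j _ => (hX j).const_mul (γ j))
  have intVX : ∀ j, Integrable (fun ω => V ω * X j ω) μ :=
    fun j => key V (X j) hVmem (hX j)
  have intXX : ∀ j k, Integrable (fun ω => X j ω * X k ω) μ :=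
    fun j k => key (X j) (X k) (hX j) (hX k)
  set I : Fin p → ℝ := fun j => ∫ ω, V ω * X j ω ∂μ with hIdef
  -- Step A: ∫ V² = ∑ γ j * I j
  have hE1 : ∫ ω, (V ω) ^ 2 ∂μ = ∑ j : Fin p, γ j * I j := by
    have hpt : ∀ ω, (V ω) ^ 2 = ∑ j : Fin p, γ j * (V ω * X j ω) := by
      intro ω
      calc (V ω) ^ 2 = (∑ j : Fin p, γ j * X j ω) * V ω := by rw [← hVγ ω]; ring
        _ = ∑ j : Fin p, γ j * (V ω * X j ω) := by
            rw [Finset.sum_mul]; exact Finset.sum_congr rfl fun j _ => by ring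
    simp_rw [hpt]
    rw [integral_finset_sum _ fun j _ => (intVX j).const_mul (γ j)]
    exact Finset.sum_congr rfl fun j _ => integral_const_mul _ _
  -- Step B: ∫ V² = ∑_{j ∉ J} β j * I j
  have hE2 : ∫ ω, (V ω) ^ 2 ∂μ = ∑ j ∈ Jᶜ, β j * I j := by
    rw [hE1, ← Finset.sum_add_sum_compl J]
    have h0 : ∑ j ∈ J, γ j * I j = 0 :=
      Finset.sum_eq_zero fun j hj => by rw [hIdef]; simp [hVorth j hj]
    rw [h0, zero_add]
    exact Finset.sum_congr rfl fun j hj => by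
      rw [hγJ j (Finset.mem_compl.mp hj)]
  -- quadratic form identity
  have hquad : ∫ ω, (V ω) ^ 2 ∂μ = dotProduct γ (Γ.mulVec γ) := by
    rw [hE1]
    simp only [Matrix.mulVec, dotProduct]
    refine Finset.sum_congr rfl fun j _ => ?_
    congr 1
    have hpt : ∀ ω, V ω * X j ω = ∑ k : Fin p, γ k * (X k ω * X j ω) := by
      intro ω
      rw [hVγ ω, Finset.sum_mul]
      exact Finset.sum_congr rfl fun k _ => by ring
    show (∫ ω, V ω * X j ω ∂μ) = _
    simp_rw [hpt]
    rw [integral_finset_sum _ fun k _ => (intXX k j).const_mul (γ k)]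
    refine Finset.sum_congr rfl fun k _ => ?_
    rw [integral_const_mul, hΓdef j k, mul_comm (γ k : ℝ)]
    congr 1
    simp_rw [mul_comm (X j _) (X k _)]
  -- eigenvalue lower bound
  have hPSD : (Γ - lam₁ • 1).PosSemidef := by
    set U : Matrix (Fin p) (Fin p) ℝ := (hΓ.eigenvectorUnitary : Matrix (Fin p) (Fin p) ℝ)
    have hUU : U * star U = 1 := (Matrix.mem_unitaryGroup_iff).mp hΓ.eigenvectorUnitary.2
    have hd : ∀ i, 0 ≤ hΓ.eigenvalues i - lam₁ := by
      intro i
      have := hmin.trans (ciInf_le (Finite.bddBelow_range _) i)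
      linarith
    have hps : (Matrix.diagonal (fun i => hΓ.eigenvalues i - lam₁)).PosSemidef :=
      Matrix.posSemidef_diagonal_iff.mpr hd
    have h := hps.mul_mul_conjTranspose_same U
    have heq : U * Matrix.diagonal (fun i => hΓ.eigenvalues i - lam₁) * U.conjTranspose
        = Γ - lam₁ • 1 := by
      have hUU' : U * U.conjTranspose = 1 := by
        rw [← Matrix.star_eq_conjTranspose]; exact hUU
      have hdiag : Matrix.diagonal (fun i => hΓ.eigenvalues i - lam₁)
          = Matrix.diagonal (RCLike.ofReal ∘ hΓ.eigenvalues) - lam₁ • 1 := by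
        ext i k
        rcases eq_or_ne i k with rfl | h
        · simp [Matrix.sub_apply, Matrix.smul_apply, Matrix.one_apply_eq,
            RCLike.ofReal_real_eq_id]
        · simp [Matrix.diagonal_apply_ne _ h, Matrix.sub_apply, Matrix.smul_apply,
            Matrix.one_apply_ne h]
      rw [hdiag, Matrix.mul_sub, Matrix.sub_mul, Matrix.mul_smul, Matrix.smul_mul,
        Matrix.mul_one, hUU']
      congr 1
      have hst := hΓ.spectral_theorem
      rw [Unitary.conjStarAlgAut_apply, Matrix.star_eq_conjTranspose] at hst
      exact hst.symm 
    rw [heq] at h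
    exact h
  have hlow : lam₁ * ∑ j : Fin p, (γ j) ^ 2 ≤ ∫ ω, (V ω) ^ 2 ∂μ := by
    have h := hPSD.dotProduct_mulVec_nonneg γ
    have hexp : dotProduct (star γ) ((Γ - lam₁ • 1).mulVec γ)
        = dotProduct γ (Γ.mulVec γ) - lam₁ * ∑ j : Fin p, (γ j) ^ 2 := by
      rw [star_trivial, Matrix.sub_mulVec, dotProduct_sub,
        Matrix.smul_mulVec, Matrix.one_mulVec, dotProduct_smul]
      congr 1
      simp only [smul_eq_mul, dotProduct]
      congr 1
      exact Finset.sum_congr rfl fun j _ => (sq (γ j)).symm ▸ (pow_two (γ j)).symm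
    rw [hexp] at h
    rw [hquad]
    linarith
  -- define S and M
  set S : ℝ := ∑ j ∈ Jᶜ, (β j) ^ 2 with hSdef
  set M : ℝ := ⨆ j : Fin p, |I j| / σ j with hMdef
  have hσ0 : ∀ j, 0 ≤ σ j := fun j => (hσ j).symm ▸ Real.sqrt_nonneg _
  have hM0 : 0 ≤ M := by
    rcases isEmpty_or_nonempty (Fin p) with hp | hp
    · rw [hMdef, Real.iSup_of_isEmpty]
    · obtain ⟨j⟩ := hp
      exact le_trans (div_nonneg (abs_nonneg _) (hσ0 j))
        (le_ciSup (f := fun j => |I j| / σ j)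
          (Set.Finite.bddAbove (Set.finite_range _)) j)
  have hS0 : 0 ≤ S := Finset.sum_nonneg fun j _ => sq_nonneg _
  -- S ≤ ‖γ‖²
  have hSγ : S ≤ ∑ j : Fin p, (γ j) ^ 2 := by
    rw [← Finset.sum_add_sum_compl J (fun j => (γ j) ^ 2)]
    have : S = ∑ j ∈ Jᶜ, (γ j) ^ 2 :=
      Finset.sum_congr rfl fun j hj => by rw [hγJ j (Finset.mem_compl.mp hj)]
    rw [this]
    exact le_add_of_nonneg_left (Finset.sum_nonneg fun j _ => sq_nonneg _)
  have hlowS : lam₁ * S ≤ ∫ ω, (V ω) ^ 2 ∂μ :=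
    le_trans (by nlinarith) hlow
  -- |I j| ≤ M * σ j
  have hIbound : ∀ j, |I j| ≤ M * σ j := by
    intro j
    by_cases hσj : σ j = 0
    · have hX2 : ∫ ω, (X j ω) ^ 2 ∂μ = 0 := by
        have h1 : ∫ ω, (X j ω) ^ 2 ∂μ ≤ 0 := by
          rw [hσ j] at hσj
          exact Real.sqrt_eq_zero'.mp hσj
        have h2 : 0 ≤ ∫ ω, (X j ω) ^ 2 ∂μ :=
          integral_nonneg fun ω => sq_nonneg _
        linarith
      have hint2 : Integrable (fun ω => (X j ω) ^ 2) μ := by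
        have := intXX j j
        simpa [pow_two] using this
      have hae : (fun ω => (X j ω) ^ 2) =ᵐ[μ] 0 :=
        (integral_eq_zero_iff_of_nonneg (fun ω => sq_nonneg _) hint2).mp hX2
      have haeX : X j =ᵐ[μ] 0 := by
        filter_upwards [hae] with ω hω
        have h2 : X j ω ^ 2 = 0 := by simpa using hω
        simpa using (pow_eq_zero_iff (n := 2) (by norm_num)).mp h2
      have hI0 : I j = 0 := by
        show (∫ ω, V ω * X j ω ∂μ) = 0
        have : (fun ω => V ω * X j ω) =ᵐ[μ] 0 := by
          filter_upwards [haeX] with ω hω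
          simp [hω]
        rw [integral_congr_ae this]; simp
      rw [hI0, hσj, mul_zero, abs_zero]
    · have hσpos : 0 < σ j := lt_of_le_of_ne (hσ0 j) (Ne.symm hσj)
      have hle : |I j| / σ j ≤ M :=
        le_ciSup (f := fun j => |I j| / σ j)
          (Set.Finite.bddAbove (Set.finite_range _)) j
      exact (div_le_iff₀ hσpos).mp hle
  have hσle : ∀ j, σ j ≤ σbar := by
    intro j
    rw [hσ j]
    calc Real.sqrt (∫ ω, (X j ω) ^ 2 ∂μ) ≤ Real.sqrt (σbar ^ 2) :=
          Real.sqrt_le_sqrt (hsecond j)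
      _ = σbar := Real.sqrt_sq hσbar.le
  -- upper bound
  have hupper : ∫ ω, (V ω) ^ 2 ∂μ ≤ σbar * Cα * M * S ^ ((α - 1) / (2 * α - 1)) := by
    have h1 : ∫ ω, (V ω) ^ 2 ∂μ ≤ ∑ j ∈ Jᶜ, |β j| * (M * σbar) := by
      rw [hE2]
      refine Finset.sum_le_sum fun j _ => ?_
      calc β j * I j ≤ |β j * I j| := le_abs_self _
        _ = |β j| * |I j| := abs_mul _ _
        _ ≤ |β j| * (M * σ j) := by
            exact mul_le_mul_of_nonneg_left (hIbound j) (abs_nonneg _)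
        _ ≤ |β j| * (M * σbar) := by
            refine mul_le_mul_of_nonneg_left ?_ (abs_nonneg _)
            exact mul_le_mul_of_nonneg_left (hσle j) hM0
    have h2 : ∑ j ∈ Jᶜ, |β j| * (M * σbar) = (M * σbar) * ∑ j ∈ Jᶜ, |β j| := by
      rw [← Finset.sum_mul, mul_comm]
    have h3 : (M * σbar) * ∑ j ∈ Jᶜ, |β j|
        ≤ (M * σbar) * (Cα * S ^ ((α - 1) / (2 * α - 1))) :=
      mul_le_mul_of_nonneg_left (hclass Jᶜ) (mul_nonneg hM0 hσbar.le)
    calc ∫ ω, (V ω) ^ 2 ∂μ ≤ ∑ j ∈ Jᶜ, |β j| * (M * σbar) := h1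
      _ = (M * σbar) * ∑ j ∈ Jᶜ, |β j| := h2
      _ ≤ (M * σbar) * (Cα * S ^ ((α - 1) / (2 * α - 1))) := h3
      _ = σbar * Cα * M * S ^ ((α - 1) / (2 * α - 1)) := by ring
  -- final algebra
  set E : ℝ := ∫ ω, (V ω) ^ 2 ∂μ with hEdef
  have hE0 : 0 ≤ E := integral_nonneg fun ω => sq_nonneg _
  set K : ℝ := σbar * Cα * M with hKdef
  have hK0 : 0 ≤ K := mul_nonneg (mul_nonneg hσbar.le hCα.le) hM0
  set θ : ℝ := (α - 1) / (2 * α - 1) with hθdef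
  have hden : 0 < 2 * α - 1 := by linarith
  have hθpos : 0 < θ := div_pos (by linarith) hden
  have hθlt1 : θ < 1 := (div_lt_one hden).mpr (by linarith)
  have hαpos : (0:ℝ) < α := by linarith
  set r : ℝ := 2 - 1 / α with hrdef
  have hr1 : (1 - θ) * r = 1 := by
    have h1 := mul_inv_cancel₀ hden.ne'
    have h2 := mul_inv_cancel₀ hαpos.ne'
    rw [hθdef, hrdef]; linear_combination (α⁻¹ - 1) * h1 - (2 * α - 1)⁻¹ * h2
  have hr2 : (-θ) * r = -1 + 1 / α := by
    linear_combination hr1 - hrdef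
  have hr0 : 0 < r := by
    rw [hrdef]
    have : 1 / α < 1 := (div_lt_one hαpos).mpr hα
    linarith
  rcases eq_or_lt_of_le hE0 with h0 | hEpos
  · rw [← h0]
    exact mul_nonneg (Real.rpow_nonneg hK0 _) (Real.rpow_nonneg hlam₁.le _)
  · have hS : S ≤ E / lam₁ := (le_div_iff₀ hlam₁).mpr (by linarith [hlowS])
    have hstep : E ≤ K * (E / lam₁) ^ θ := by
      refine hupper.trans (mul_le_mul_of_nonneg_left ?_ hK0)
      exact Real.rpow_le_rpow hS0 hS hθpos.le
    have hEθ : 0 < E ^ θ := Real.rpow_pos_of_pos hEpos θ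
    have h1 : E ^ (1 - θ) ≤ K * lam₁ ^ (-θ) := by
      rw [← mul_le_mul_iff_right₀ hEθ]
      calc E ^ θ * E ^ (1 - θ) = E := by
            rw [← Real.rpow_add hEpos]
            norm_num
        _ ≤ K * (E / lam₁) ^ θ := hstep
        _ = E ^ θ * (K * lam₁ ^ (-θ)) := by
            rw [Real.div_rpow hE0 hlam₁.le, Real.rpow_neg hlam₁.le]
            ring
    have h2 : (E ^ (1 - θ)) ^ r ≤ (K * lam₁ ^ (-θ)) ^ r :=
      Real.rpow_le_rpow (Real.rpow_nonneg hE0 _) h1 hr0.le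
    have hL : (E ^ (1 - θ)) ^ r = E := by
      rw [← Real.rpow_mul hE0, hr1, Real.rpow_one]
    have hR : (K * lam₁ ^ (-θ)) ^ r = K ^ r * lam₁ ^ (-1 + 1 / α) := by
      rw [Real.mul_rpow hK0 (Real.rpow_nonneg hlam₁.le _),
        ← Real.rpow_mul hlam₁.le, hr2]
    rw [hL, hR] at h2
    exact h2
end

section
/- Let α > 1 and c > 0, and let (a_m)_{m ≥ 0} be a sequence of nonnegative real numbers satisfying a_{m+1} ≤ a_m ( 1 − c · a_m^{1/(2α−1)} ) for every m ≥ 0. Then there exists a constant G > 0, depending only on α, c and a_0, such that a_m ≤ G · m^{−(2α−1)} for every m ≥ 1. -/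
/-- Recursion-to-rate implication (Lemma 1 of Gao, Ing and Yang, 2013): if a
nonnegative sequence satisfies `a_{m+1} ≤ a_m (1 − c a_m^{1/(2α−1)})`, then there is
`G > 0`, depending only on `α`, `c` and `a₀`, with `a_m ≤ G m^{−(2α−1)}` for all
`m ≥ 1`. -/
theorem stmt_14 (α c a₀ : ℝ) (hα : 1 < α) (hc : 0 < c) :
    ∃ G : ℝ, 0 < G ∧
      ∀ a : ℕ → ℝ, a 0 = a₀ →
        (∀ m, 0 ≤ a m) →
        (∀ m, a (m + 1) ≤ a m * (1 - c * (a m) ^ (1 / (2 * α - 1)))) →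
        ∀ m : ℕ, 1 ≤ m → a m ≤ G * (m : ℝ) ^ (-(2 * α - 1)) := by
  set β : ℝ := 2 * α - 1 with hβdef
  have hβ1 : 1 < β := by simp only [hβdef]; linarith
  have hβ0 : 0 < β := by linarith
  have hβc : 0 < β / c := div_pos hβ0 hc
  refine ⟨(β / c) ^ β, Real.rpow_pos_of_pos hβc _, ?_⟩
  intro a ha0 hnn hrec
  have key : ∀ m : ℕ, a m = 0 ∨ (m : ℝ) * (c / β) ≤ (a m) ^ (-(1 / β)) := by
    intro m
    induction m with
    | zero =>
      right
      simp only [Nat.cast_zero, zero_mul]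
      exact Real.rpow_nonneg (hnn 0) _
    | succ n ih =>
      rcases ((eq_or_lt_of_le (hnn (n + 1))).imp Eq.symm id) with h0 | hpos
      · exact Or.inl h0
      right
      have hposn : 0 < a n := by
        rcases ((eq_or_lt_of_le (hnn n)).imp Eq.symm id) with hz | hp
        · exfalso
          have h := hrec n
          rw [hz] at h
          simp at h
          linarith
        · exact hp
      have ihx : (n : ℝ) * (c / β) ≤ (a n) ^ (-(1 / β)) := by
        rcases ih with h0 | h
        · exact absurd h0 hposn.ne'
        · exact h
      set t : ℝ := c * (a n) ^ (1 / β) with htdef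
      have hrecn : a (n + 1) ≤ a n * (1 - t) := by rw [htdef]; exact hrec n
      have ht0 : 0 < t := mul_pos hc (Real.rpow_pos_of_pos hposn _)
      have ht1 : t < 1 := by
        by_contra h
        push_neg at h
        have h1 : a n * (1 - t) ≤ 0 := by
          apply mul_nonpos_of_nonneg_of_nonpos hposn.le
          linarith
        linarith
      have hb1 : 0 < 1 / β := by positivity
      have hb2 : 1 / β ≤ 1 := by
        rw [div_le_one hβ0]; linarith
      -- Bernoulli: (1 - t)^(1/β) ≤ 1 - t/β
      have bern : (1 - t) ^ (1 / β) ≤ 1 - t / β := by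
        have hber := rpow_one_add_le_one_add_mul_self (s := -t) (by linarith) hb1.le hb2
        have e : (1 : ℝ) + -t = 1 - t := by ring
        rw [e] at hber
        calc (1 - t) ^ (1 / β) ≤ 1 + 1 / β * -t := hber
          _ = 1 - t / β := by ring
      have h1t : (0 : ℝ) < 1 - t := by linarith
      have htb : t / β < 1 := by
        rw [div_lt_one hβ0]; linarith
      have h1tb : (0 : ℝ) < 1 - t / β := by linarith
      -- a(n+1)^(1/β) ≤ (a n)^(1/β) * (1 - t/β)
      have step1 : a (n + 1) ^ (1 / β) ≤ (a n) ^ (1 / β) * (1 - t / β) := by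
        calc a (n + 1) ^ (1 / β)
            ≤ (a n * (1 - t)) ^ (1 / β) :=
              Real.rpow_le_rpow (hnn _) hrecn hb1.le
          _ = (a n) ^ (1 / β) * (1 - t) ^ (1 / β) :=
              Real.mul_rpow hposn.le h1t.le
          _ ≤ (a n) ^ (1 / β) * (1 - t / β) := by
              apply mul_le_mul_of_nonneg_left bern (Real.rpow_nonneg hposn.le _)
      have hpow_pos : 0 < a (n + 1) ^ (1 / β) := Real.rpow_pos_of_pos hpos _
      have hpown_pos : 0 < (a n) ^ (1 / β) := Real.rpow_pos_of_pos hposn _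
      -- invert
      have step2 : ((a n) ^ (1 / β) * (1 - t / β))⁻¹ ≤ (a (n + 1) ^ (1 / β))⁻¹ :=
        inv_anti₀ hpow_pos step1
      have inv1 : ((a n) ^ (1 / β))⁻¹ * (1 + t / β) ≤ ((a n) ^ (1 / β) * (1 - t / β))⁻¹ := by
        rw [mul_inv]
        apply mul_le_mul_of_nonneg_left _ (inv_nonneg.mpr hpown_pos.le)
        rw [inv_eq_one_div, le_div_iff₀ h1tb]
        nlinarith [sq_nonneg (t / β)]
      have hcancel : ((a n) ^ (1 / β))⁻¹ * t = c := by
        rw [htdef, ← Real.rpow_neg hposn.le, mul_comm c _, ← mul_assoc,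
          ← Real.rpow_add hposn]
        simp
      have hxrw : ∀ k : ℕ, 0 < a k → (a k) ^ (-(1 / β)) = ((a k) ^ (1 / β))⁻¹ := by
        intro k hk
        rw [Real.rpow_neg hk.le]
      rw [hxrw _ hpos]
      rw [hxrw _ hposn] at ihx
      have hstep : ((a n) ^ (1 / β))⁻¹ + c / β ≤ (a (n + 1) ^ (1 / β))⁻¹ := by
        have e : ((a n) ^ (1 / β))⁻¹ * (1 + t / β)
            = ((a n) ^ (1 / β))⁻¹ + c / β := by
          have : ((a n) ^ (1 / β))⁻¹ * (t / β) = c / β := by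
            rw [← hcancel]; ring
          calc ((a n) ^ (1 / β))⁻¹ * (1 + t / β)
              = ((a n) ^ (1 / β))⁻¹ + ((a n) ^ (1 / β))⁻¹ * (t / β) := by ring
            _ = ((a n) ^ (1 / β))⁻¹ + c / β := by rw [this]
        linarith [le_trans (e ▸ inv1) step2]
      push_cast
      have hcb : 0 < c / β := div_pos hc hβ0
      nlinarith [sq_nonneg (t / β)]
  intro m hm
  have hmpos : (0 : ℝ) < m := by exact_mod_cast hm
  rcases key m with h0 | hx
  · rw [h0]
    positivity
  have hrhs : (0 : ℝ) < (m : ℝ) * (c / β) := by positivity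
  have hampos : 0 < a m := by
    rcases ((eq_or_lt_of_le (hnn m)).imp Eq.symm id) with hz | hp
    · exfalso
      rw [hz, Real.zero_rpow (neg_ne_zero.mpr (by positivity : (1/β) ≠ 0))] at hx
      linarith
    · exact hp
  have ham : a m = ((a m) ^ (-(1 / β))) ^ (-β) := by
    rw [← Real.rpow_mul (hnn m)]
    have e1 : -(1 / β) * -β = 1 := by field_simp
    rw [e1, Real.rpow_one]
  rw [ham]
  have hmono : ((a m) ^ (-(1 / β))) ^ (-β) ≤ ((m : ℝ) * (c / β)) ^ (-β) :=
    Real.rpow_le_rpow_of_nonpos hrhs hx (by linarith)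
  refine hmono.trans_eq ?_
  rw [Real.mul_rpow hmpos.le (div_pos hc hβ0).le]
  rw [Real.rpow_neg (div_pos hc hβ0).le, ← Real.inv_rpow (div_pos hc hβ0).le, inv_div]
  ring
end

section
/- Let X = (X_1, …, X_p) be a square-integrable random vector in R^p with E[X_j²] = 1 for all j and λ_min(E[X X']) ≥ λ₁ > 0. Let α > 1 and C_α > 0, and let β ∈ R^p satisfy the polynomial-decay class condition: ‖β(J)‖₁ ≤ C_α (‖β(J)‖₂²)^{(α−1)/(2α−1)} for every J ⊆ {1, …, p}. Let D = Σ_{j=1}^p β_j X_j and fix ξ ∈ (0,1]. Define V_0 = D, J_0 = ∅, and recursively for m ≥ 1: choose any j_m ∈ {1, …, p} with |E[V_{m−1} X_{j_m}]| ≥ ξ max_{1≤ℓ≤p} |E[V_{m−1} X_ℓ]|, set J_m = J_{m−1} ∪ {j_m}, and let V_m = D − P_{J_m} D, where P_{J_m} is the orthogonal projection in L² onto span{X_j : j ∈ J_m}. Then there exists a constant G₁ > 0, depending only on ξ, λ₁, α, C_α and E[D²], such that E[V_m²] ≤ G₁ · m^{−(2α−1)} for every m ≥ 1. -/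
open MeasureTheory ProbabilityTheory Finset

section helpers

open Matrix Real

lemma quad_lb {n : Type*} [Fintype n] [DecidableEq n] (Γ : Matrix n n ℝ)
    (hΓ : Γ.IsHermitian) (lam : ℝ) (hl : ∀ i, lam ≤ hΓ.eigenvalues i) (v : n → ℝ) :
    lam * (v ⬝ᵥ v) ≤ v ⬝ᵥ (Γ *ᵥ v) := by
  classical
  set U : Matrix n n ℝ := (hΓ.eigenvectorUnitary : Matrix n n ℝ) with hU
  have hUU : U * star U = 1 := (Matrix.mem_unitaryGroup_iff).mp hΓ.eigenvectorUnitary.2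
  set y : n → ℝ := (star U) *ᵥ v with hy
  have hspec : Γ = U * Matrix.diagonal hΓ.eigenvalues * star U := by
    have := hΓ.spectral_theorem
    simpa using this
  have base : ∀ w : n → ℝ, v ⬝ᵥ (U *ᵥ w) = y ⬝ᵥ w := by
    intro w
    rw [hy, dotProduct_mulVec]
    congr 1
    show v ᵥ* U = Matrix.transpose U *ᵥ v
    rw [← Matrix.vecMul_transpose]
    rfl
  have key : v ⬝ᵥ (Γ *ᵥ v) = ∑ i, hΓ.eigenvalues i * (y i)^2 := by
    have h1 : v ⬝ᵥ (Γ *ᵥ v) = v ⬝ᵥ ((U * Matrix.diagonal hΓ.eigenvalues * star U) *ᵥ v) :=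
      congrArg (fun M : Matrix n n ℝ => v ⬝ᵥ (M *ᵥ v)) hspec
    rw [h1, ← Matrix.mulVec_mulVec, ← Matrix.mulVec_mulVec, base, ← hy]
    simp [dotProduct, Matrix.mulVec_diagonal, pow_two]
    apply Finset.sum_congr rfl
    intro i _
    ring
  have key2 : v ⬝ᵥ v = ∑ i, (y i)^2 := by
    have h1 : v ⬝ᵥ v = v ⬝ᵥ ((U * star U) *ᵥ v) := by rw [hUU]; simp
    rw [h1, ← Matrix.mulVec_mulVec, base, hy]
    simp [dotProduct, pow_two]
  rw [key, key2, Finset.mul_sum]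
  apply Finset.sum_le_sum
  intro i _
  exact mul_le_mul_of_nonneg_right (hl i) (sq_nonneg _)

lemma int_mul_of_l2 {Ω : Type} [MeasurableSpace Ω] {μ : Measure Ω} {f g : Ω → ℝ}
    (hf : MemLp f 2 μ) (hg : MemLp g 2 μ) :
    Integrable (fun ω => f ω * g ω) μ := by
  refine Integrable.mono' (((hf.integrable_sq.add hg.integrable_sq).div_const 2))
    (hf.1.mul hg.1) (Filter.Eventually.of_forall fun ω => ?_)
  rw [norm_mul]
  simp only [Pi.add_apply, Real.norm_eq_abs]
  nlinarith [sq_abs (f ω), sq_abs (g ω), sq_nonneg (|f ω| - |g ω|),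
    abs_nonneg (f ω), abs_nonneg (g ω)]

lemma sq_expand {Ω : Type} [MeasurableSpace Ω] {μ : Measure Ω} {f g : Ω → ℝ}
    (hf : MemLp f 2 μ) (hg : MemLp g 2 μ) :
    ∫ ω, (f ω + g ω)^2 ∂μ
      = ∫ ω, (f ω)^2 ∂μ + (2 * ∫ ω, f ω * g ω ∂μ + ∫ ω, (g ω)^2 ∂μ) := by
  have hptw : ∀ ω, (f ω + g ω)^2 = (f ω)^2 + (2 * (f ω * g ω) + (g ω)^2) := by
    intro ω; ring
  simp only [hptw]
  have I2 : Integrable (fun ω => 2 * (f ω * g ω) + (g ω)^2) μ :=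
    ((int_mul_of_l2 hf hg).const_mul 2).add hg.integrable_sq
  rw [integral_add hf.integrable_sq I2,
    integral_add ((int_mul_of_l2 hf hg).const_mul 2) hg.integrable_sq,
    integral_const_mul]

lemma rate_lemma (a : ℕ → ℝ) (c r : ℝ) (hc : 0 < c) (hr : 1 ≤ r)
    (ha0 : ∀ m, 0 ≤ a m) (hmono : ∀ m, a (m + 1) ≤ a m)
    (hrec : ∀ m, 0 < a m → a (m + 1) ≤ a m - c * a m ^ (1 + 1/r)) :
    ∀ m : ℕ, 1 ≤ m → a m ≤ (c / r) ^ (-r) * (m : ℝ) ^ (-r) := by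
  have hr0 : (0:ℝ) < r := lt_of_lt_of_le one_pos hr
  have hθ0 : 0 < 1/r := by positivity
  have hθ1 : 1/r ≤ 1 := by rw [div_le_one hr0]; exact hr
  have hcr : 0 < c / r := by positivity
  have hanti : Antitone a := antitone_nat_of_succ_le hmono
  intro M hM
  rcases eq_or_lt_of_le (ha0 M) with h0 | hMpos
  · rw [← h0]; positivity
  have hposk : ∀ k, k ≤ M → 0 < a k := fun k hk => lt_of_lt_of_le hMpos (hanti hk)
  have key : ∀ k, k ≤ M → (k : ℝ) * (c / r) ≤ a k ^ (-(1/r)) := by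
    intro k hk
    induction k with
    | zero => simpa using Real.rpow_nonneg (ha0 0) _
    | succ n ih =>
      have hn : n ≤ M := le_of_lt (Nat.lt_of_succ_le hk)
      have han : 0 < a n := hposk n hn
      have han1 : 0 < a (n + 1) := hposk (n + 1) hk
      set u : ℝ := c * a n ^ (1/r) with hu
      have hu0 : 0 < u := mul_pos hc (Real.rpow_pos_of_pos han _)
      have hstep : a (n + 1) ≤ a n * (1 - u) := by
        have h := hrec n han
        have hpow : a n ^ (1 + 1/r) = a n * a n ^ (1/r) := by
          rw [Real.rpow_add han, Real.rpow_one]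
        rw [hpow] at h
        calc a (n+1) ≤ a n - c * (a n * a n ^ (1/r)) := h
          _ = a n * (1 - u) := by rw [hu]; ring
      have hu1 : u < 1 := by
        by_contra hcon
        push_neg at hcon
        have h2 : a n * (1 - u) ≤ 0 :=
          mul_nonpos_of_nonneg_of_nonpos han.le (by linarith)
        linarith [han1.trans_le hstep]
      have h1u : (0:ℝ) < 1 - u := by linarith
      have hbern : 1 + (1/r) * u ≤ (1 - u) ^ (-(1/r)) := by
        have hb : (1 - u) ^ ((1:ℝ)/r) ≤ 1 - (1/r) * u := by
          have hB := rpow_one_add_le_one_add_mul_self (s := -u) (p := 1/r)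
            (by linarith) hθ0.le hθ1
          rw [← sub_eq_add_neg] at hB
          calc (1-u) ^ ((1:ℝ)/r) ≤ 1 + (1/r) * (-u) := hB
            _ = 1 - (1/r) * u := by ring
        have hx : (0:ℝ) < (1-u) ^ ((1:ℝ)/r) := Real.rpow_pos_of_pos h1u _
        rw [Real.rpow_neg h1u.le, inv_eq_one_div, le_div_iff₀ hx]
        have h9 : (1 + (1/r)*u) * ((1-u)^((1:ℝ)/r)) ≤ (1 + (1/r)*u) * (1 - (1/r)*u) :=
          mul_le_mul_of_nonneg_left hb (by positivity)
        nlinarith [sq_nonneg ((1/r)*u)]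
      have hmain : a n ^ (-(1/r)) + c / r ≤ a (n + 1) ^ (-(1/r)) := by
        have h1 : (a n * (1 - u)) ^ (-(1/r)) ≤ a (n+1) ^ (-(1/r)) :=
          Real.rpow_le_rpow_of_nonpos han1 hstep (by linarith)
        have h2 : (a n * (1 - u)) ^ (-(1/r))
            = a n ^ (-(1/r)) * (1 - u) ^ (-(1/r)) := Real.mul_rpow han.le h1u.le
        have h3 : a n ^ (-(1/r)) * (1 + (1/r) * u) ≤ a n ^ (-(1/r)) * (1 - u) ^ (-(1/r)) :=
          mul_le_mul_of_nonneg_left hbern (Real.rpow_pos_of_pos han _).le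
        have h4 : a n ^ (-(1/r)) * (1 + (1/r) * u) = a n ^ (-(1/r)) + c / r := by
          have h5 : a n ^ (-(1/r)) * a n ^ ((1:ℝ)/r) = 1 := by
            rw [← Real.rpow_add han]; simp
          have h6 : a n ^ (-(1/r)) * (1 + 1/r * u)
              = a n ^ (-(1/r)) + (1/r) * c * (a n ^ (-(1/r)) * a n ^ ((1:ℝ)/r)) := by
            rw [hu]; ring
          rw [h6, h5]; ring
        linarith [h1, h2 ▸ h3, h4]
      calc ((n + 1 : ℕ) : ℝ) * (c/r) = (n:ℝ) * (c/r) + c/r := by push_cast; ring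
        _ ≤ a n ^ (-(1/r)) + c/r := by linarith [ih hn]
        _ ≤ a (n+1) ^ (-(1/r)) := hmain
  have hKM := key M le_rfl
  have hM1 : (0:ℝ) < (M:ℝ) := by exact_mod_cast hM
  have hMr : (0:ℝ) < (M:ℝ) * (c/r) := by positivity
  have h5 : ((M:ℝ) * (c/r)) ^ r ≤ (a M ^ (-(1/r))) ^ r :=
    Real.rpow_le_rpow hMr.le hKM hr0.le
  have h6 : (a M ^ (-(1/r))) ^ r = (a M)⁻¹ := by
    rw [← Real.rpow_mul (ha0 M), show -(1/r) * r = -1 by field_simp]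
    exact Real.rpow_neg_one _
  rw [h6] at h5
  have h7 : a M ≤ (((M:ℝ) * (c/r)) ^ r)⁻¹ := by
    rw [← inv_inv (a M)]
    exact inv_anti₀ (Real.rpow_pos_of_pos hMr _) h5
  calc a M ≤ (((M:ℝ) * (c/r)) ^ r)⁻¹ := h7
    _ = ((M:ℝ) * (c/r)) ^ (-r) := (Real.rpow_neg hMr.le _).symm
    _ = (M:ℝ) ^ (-r) * (c/r) ^ (-r) := Real.mul_rpow hM1.le hcr.le
    _ = (c / r) ^ (-r) * (M:ℝ) ^ (-r) := by ring

end helpers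

/-- Population weak-OGA approximation rate (display (A.1) / Step 2 of the proof of
Theorem 2): under `E[Xⱼ²] = 1`, `λ_min(E[XX']) ≥ λ₁ > 0`, and the polynomial-decay
class condition on `β`, the residuals `V_m = D − P_{J_m} D` of the population weak
orthogonal greedy algorithm with weakness parameter `ξ` satisfy
`E[V_m²] ≤ G₁ m^{−(2α−1)}` for all `m ≥ 1`, where `G₁ > 0` depends only on
`ξ, λ₁, α, C_α` and `E[D²]`. -/
theorem stmt_15 (ξ lam₁ α Cα ED2 : ℝ)
    (hξ0 : 0 < ξ) (hξ1 : ξ ≤ 1) (hlam₁ : 0 < lam₁) (hα : 1 < α) (hCα : 0 < Cα) :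
    ∃ G₁ : ℝ, 0 < G₁ ∧
      ∀ (p : ℕ), 0 < p →
      ∀ (Ω : Type) (_inst : MeasurableSpace Ω) (μ : Measure Ω),
        IsProbabilityMeasure μ →
        ∀ X : Fin p → Ω → ℝ,
          (∀ j, MemLp (X j) 2 μ) →
          (∀ j, ∫ ω, (X j ω) ^ 2 ∂μ = 1) →
          ∀ (Γ : Matrix (Fin p) (Fin p) ℝ),
            (∀ j k, Γ j k = ∫ ω, X j ω * X k ω ∂μ) →
            ∀ (hΓ : Γ.IsHermitian), lam₁ ≤ ⨅ i, hΓ.eigenvalues i →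
          ∀ β : Fin p → ℝ,
            (∀ J : Finset (Fin p),
              ∑ j ∈ J, |β j| ≤ Cα * (∑ j ∈ J, (β j) ^ 2) ^ ((α - 1) / (2 * α - 1))) →
          ∀ D : Ω → ℝ, (∀ ω, D ω = ∑ j : Fin p, β j * X j ω) →
            (∫ ω, (D ω) ^ 2 ∂μ = ED2) →
          ∀ (Jseq : ℕ → Finset (Fin p)) (jsel : ℕ → Fin p) (V : ℕ → Ω → ℝ),
            Jseq 0 = ∅ →
            (∀ ω, V 0 ω = D ω) →
            (∀ m : ℕ, Jseq (m + 1) = insert (jsel m) (Jseq m)) →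
            (∀ m : ℕ, ξ * ⨆ l : Fin p, |∫ ω, V m ω * X l ω ∂μ|
                ≤ |∫ ω, V m ω * X (jsel m) ω ∂μ|) →
            (∀ m : ℕ, ∃ c : Fin p → ℝ,
              ∀ ω, V m ω = D ω - ∑ j ∈ Jseq m, c j * X j ω) →
            (∀ m : ℕ, ∀ j ∈ Jseq m, ∫ ω, V m ω * X j ω ∂μ = 0) →
            ∀ m : ℕ, 1 ≤ m →
              ∫ ω, (V m ω) ^ 2 ∂μ ≤ G₁ * (m : ℝ) ^ (-(2 * α - 1)) := by
  classical
  have hr1 : (1:ℝ) < 2 * α - 1 := by linarith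
  set r : ℝ := 2 * α - 1 with hrdef
  have hr0 : (0:ℝ) < r := by linarith
  set γ : ℝ := (α - 1) / (2 * α - 1) with hγdef
  have hγ0 : 0 ≤ γ := div_nonneg (by linarith) (by linarith)
  set c : ℝ := ξ^2 * lam₁ ^ (2*γ) / Cα^2 with hcdef
  have hc0 : 0 < c :=
    div_pos (mul_pos (by positivity) (Real.rpow_pos_of_pos hlam₁ _)) (by positivity)
  refine ⟨(c / r) ^ (-r), Real.rpow_pos_of_pos (by positivity) _, ?_⟩
  intro p hp Ω _inst μ hμ X hX2 hXnorm Γ hΓdef hΓ hlamle β hβ D hD hED2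
    Jseq jsel V hJ0 hV0 hJins hgreedy hVrep hVortho
  haveI : Nonempty (Fin p) := Fin.pos_iff_nonempty.mp hp
  -- membership facts
  have hDeq : D = fun ω => ∑ j : Fin p, β j * X j ω := funext hD
  have hDmem : MemLp D 2 μ := by
    rw [hDeq]; exact memLp_finset_sum _ (fun j _ => (hX2 j).const_mul (β j))
  have hsummem : ∀ (s : Finset (Fin p)) (d : Fin p → ℝ),
      MemLp (fun ω => ∑ j ∈ s, d j * X j ω) 2 μ :=
    fun s d => memLp_finset_sum _ (fun j _ => (hX2 j).const_mul (d j))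
  have hVmem : ∀ m, MemLp (V m) 2 μ := by
    intro m
    obtain ⟨cc, hcc⟩ := hVrep m
    have h2 : V m = fun ω => D ω - ∑ j ∈ Jseq m, cc j * X j ω := funext hcc
    rw [h2]
    exact hDmem.sub (hsummem _ _)
  have ha0 : ∀ m, (0:ℝ) ≤ ∫ ω, (V m ω)^2 ∂μ := fun m => integral_nonneg fun ω => sq_nonneg _
  have hsum_int : ∀ (m : ℕ) (s : Finset (Fin p)) (d : Fin p → ℝ),
      ∫ ω, V m ω * (∑ j ∈ s, d j * X j ω) ∂μ
        = ∑ j ∈ s, d j * ∫ ω, V m ω * X j ω ∂μ := by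
    intro m s d
    have hptw : ∀ ω, V m ω * (∑ j ∈ s, d j * X j ω)
        = ∑ j ∈ s, d j * (V m ω * X j ω) := by
      intro ω
      rw [Finset.mul_sum]
      exact Finset.sum_congr rfl fun j _ => by ring
    simp only [hptw]
    rw [integral_finset_sum _ (fun j _ => (int_mul_of_l2 (hVmem m) (hX2 j)).const_mul (d j))]
    exact Finset.sum_congr rfl fun j _ => integral_const_mul _ _
  have hspan : ∀ (m : ℕ) (d : Fin p → ℝ),
      ∫ ω, V m ω * (∑ j ∈ Jseq m, d j * X j ω) ∂μ = 0 := by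
    intro m d
    rw [hsum_int m _ d]
    exact Finset.sum_eq_zero fun j hj => by rw [hVortho m j hj, mul_zero]
  have haD : ∀ m, ∫ ω, (V m ω)^2 ∂μ
      = ∑ j ∈ (Jseq m)ᶜ, β j * ∫ ω, V m ω * X j ω ∂μ := by
    intro m
    obtain ⟨cc, hcc⟩ := hVrep m
    have h1 : ∀ ω, (V m ω)^2
        = V m ω * D ω - V m ω * (∑ j ∈ Jseq m, cc j * X j ω) := by
      intro ω
      rw [pow_two]
      nth_rewrite 2 [hcc ω]
      ring
    simp only [h1]
    rw [integral_sub (int_mul_of_l2 (hVmem m) hDmem)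
      (int_mul_of_l2 (hVmem m) (hsummem _ _)), hspan m cc, sub_zero]
    have h2 : ∫ ω, V m ω * D ω ∂μ = ∑ j : Fin p, β j * ∫ ω, V m ω * X j ω ∂μ := by
      have h3 : ∀ ω, V m ω * D ω = V m ω * (∑ j ∈ Finset.univ, β j * X j ω) := by
        intro ω; rw [hD ω]
      simp only [h3]
      exact hsum_int m Finset.univ β
    rw [h2]
    symm
    apply Finset.sum_subset (Finset.subset_univ _)
    intro j _ hj
    have hjm : j ∈ Jseq m := by simpa using hj
    rw [hVortho m j hjm, mul_zero]
  have heig : ∀ i, lam₁ ≤ hΓ.eigenvalues i := fun i =>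
    hlamle.trans (ciInf_le (Set.Finite.bddBelow (Set.finite_range _)) i)
  have hquad : ∀ m, lam₁ * ∑ j ∈ (Jseq m)ᶜ, (β j)^2 ≤ ∫ ω, (V m ω)^2 ∂μ := by
    intro m
    obtain ⟨cc, hcc⟩ := hVrep m
    set b : Fin p → ℝ := fun j => β j - (if j ∈ Jseq m then cc j else 0) with hb
    have hVb : ∀ ω, V m ω = ∑ j : Fin p, b j * X j ω := by
      intro ω
      rw [hcc ω, hD ω]
      rw [show (∑ j ∈ Jseq m, cc j * X j ω)
          = ∑ j : Fin p, (if j ∈ Jseq m then cc j else 0) * X j ω by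
        simp only [ite_mul, zero_mul]
        rw [Finset.sum_ite_mem, Finset.univ_inter]]
      rw [← Finset.sum_sub_distrib]
      exact Finset.sum_congr rfl fun j _ => by rw [hb]; ring
    have hab : ∫ ω, (V m ω)^2 ∂μ = ∑ j : Fin p, ∑ k : Fin p, b j * b k * Γ j k := by
      have h1 : ∀ ω, (V m ω)^2
          = ∑ j : Fin p, ∑ k : Fin p, (b j * b k) * (X j ω * X k ω) := by
        intro ω
        rw [pow_two, hVb ω, Finset.sum_mul_sum]
        exact Finset.sum_congr rfl fun j _ => Finset.sum_congr rfl fun k _ => by ring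
      simp only [h1]
      rw [integral_finset_sum _ (fun j _ => integrable_finset_sum _
        (fun k _ => (int_mul_of_l2 (hX2 j) (hX2 k)).const_mul _))]
      refine Finset.sum_congr rfl fun j _ => ?_
      rw [integral_finset_sum _ (fun k _ => (int_mul_of_l2 (hX2 j) (hX2 k)).const_mul _)]
      refine Finset.sum_congr rfl fun k _ => ?_
      rw [integral_const_mul, hΓdef j k]
    have h2 := quad_lb Γ hΓ lam₁ heig b
    have h3 : dotProduct b (Γ.mulVec b) = ∑ j : Fin p, ∑ k : Fin p, b j * b k * Γ j k := by
      simp only [dotProduct, Matrix.mulVec, Finset.mul_sum]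
      exact Finset.sum_congr rfl fun j _ => Finset.sum_congr rfl fun k _ => by ring
    have h4 : ∑ j ∈ (Jseq m)ᶜ, (β j)^2 ≤ dotProduct b b := by
      rw [dotProduct]
      have h5 : ∀ j ∈ (Jseq m)ᶜ, (β j)^2 = b j * b j := by
        intro j hj
        simp only [Finset.mem_compl] at hj
        simp only [hb, if_neg hj]
        ring
      rw [Finset.sum_congr rfl h5]
      exact Finset.sum_le_sum_of_subset_of_nonneg (Finset.subset_univ _)
        (fun j _ _ => mul_self_nonneg _)
    calc lam₁ * ∑ j ∈ (Jseq m)ᶜ, (β j)^2 ≤ lam₁ * (dotProduct b b) :=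
        mul_le_mul_of_nonneg_left h4 hlam₁.le
      _ ≤ dotProduct b (Γ.mulVec b) := h2
      _ = ∑ j : Fin p, ∑ k : Fin p, b j * b k * Γ j k := h3
      _ = ∫ ω, (V m ω)^2 ∂μ := hab.symm
  have hstep : ∀ m, ∫ ω, (V (m+1) ω)^2 ∂μ
      ≤ ∫ ω, (V m ω)^2 ∂μ - (∫ ω, V m ω * X (jsel m) ω ∂μ)^2 := by
    intro m
    obtain ⟨cc, hcc⟩ := hVrep m
    obtain ⟨cc', hcc'⟩ := hVrep (m+1)
    set j0 : Fin p := jsel m with hj0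
    set t : ℝ := ∫ ω, V m ω * X j0 ω ∂μ with ht
    set d : Fin p → ℝ := fun j =>
      cc' j - (if j ∈ Jseq m then cc j else 0) - (if j = j0 then t else 0) with hd
    have hsub : Jseq m ⊆ Jseq (m+1) := by
      rw [hJins m]; exact Finset.subset_insert _ _
    have hj0mem : j0 ∈ Jseq (m+1) := by
      rw [hJins m]; exact Finset.mem_insert_self _ _
    have hptw : ∀ ω, (V (m+1) ω + (∑ j ∈ Jseq (m+1), d j * X j ω))^2
        = (V m ω + (-t) * X j0 ω)^2 := by
      intro ω
      have e1 : ∑ j ∈ Jseq (m+1), (if j ∈ Jseq m then cc j else 0) * X j ω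
          = ∑ j ∈ Jseq m, cc j * X j ω := by
        simp only [ite_mul, zero_mul]
        rw [Finset.sum_ite_mem, Finset.inter_eq_right.mpr hsub]
      have e2 : ∑ j ∈ Jseq (m+1), (if j = j0 then t else 0) * X j ω
          = t * X j0 ω := by
        simp only [ite_mul, zero_mul]
        rw [Finset.sum_ite_eq' (Jseq (m+1)) j0 (fun j => t * X j ω), if_pos hj0mem]
      have e3 : ∑ j ∈ Jseq (m+1), d j * X j ω
          = (∑ j ∈ Jseq (m+1), cc' j * X j ω)
            - (∑ j ∈ Jseq m, cc j * X j ω) - t * X j0 ω := by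
        rw [← e1, ← e2, ← Finset.sum_sub_distrib, ← Finset.sum_sub_distrib]
        exact Finset.sum_congr rfl fun j _ => by rw [hd]; ring
      rw [hcc' ω, hcc ω, e3]
      ring
    have hgmem : MemLp (fun ω => ∑ j ∈ Jseq (m+1), d j * X j ω) 2 μ := hsummem _ _
    have hA : ∫ ω, (V (m+1) ω + (∑ j ∈ Jseq (m+1), d j * X j ω))^2 ∂μ
        = ∫ ω, (V m ω + (-t) * X j0 ω)^2 ∂μ :=
      integral_congr_ae (Filter.Eventually.of_forall fun ω => hptw ω)
    have hB := sq_expand (hVmem (m+1)) hgmem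
    have hC := sq_expand (hVmem m) ((hX2 j0).const_mul (-t))
    rw [hspan (m+1) d] at hB
    have hC1 : ∫ ω, V m ω * ((-t) * X j0 ω) ∂μ = -t * t := by
      have hpt : ∀ ω, V m ω * ((-t) * X j0 ω) = (-t) * (V m ω * X j0 ω) := fun ω => by ring
      simp only [hpt]
      rw [integral_const_mul, ← ht]
    have hC2 : ∫ ω, ((-t) * X j0 ω)^2 ∂μ = t^2 := by
      have hpt : ∀ ω, ((-t) * X j0 ω)^2 = t^2 * (X j0 ω)^2 := fun ω => by ring
      simp only [hpt]
      rw [integral_const_mul, hXnorm j0, mul_one]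
    rw [hC1, hC2] at hC
    have hgsq : 0 ≤ ∫ ω, (∑ j ∈ Jseq (m+1), d j * X j ω)^2 ∂μ :=
      integral_nonneg fun ω => sq_nonneg _
    have hAA := hA
    rw [hB, hC] at hAA
    nlinarith [hAA, hgsq]
  have hrec : ∀ m, 0 < ∫ ω, (V m ω)^2 ∂μ →
      ∫ ω, (V (m+1) ω)^2 ∂μ
        ≤ ∫ ω, (V m ω)^2 ∂μ - c * (∫ ω, (V m ω)^2 ∂μ) ^ (1 + 1/r) := by
    intro m hA
    set A : ℝ := ∫ ω, (V m ω)^2 ∂μ with hAdef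
    set t : ℝ := ∫ ω, V m ω * X (jsel m) ω ∂μ with ht
    have hbdd : BddAbove (Set.range fun l : Fin p => |∫ ω, V m ω * X l ω ∂μ|) :=
      Set.Finite.bddAbove (Set.finite_range _)
    set S : ℝ := ⨆ l : Fin p, |∫ ω, V m ω * X l ω ∂μ| with hS
    have hipS : ∀ j, |∫ ω, V m ω * X j ω ∂μ| ≤ S := fun j => le_ciSup hbdd j
    have hS0 : 0 ≤ S := le_trans (abs_nonneg _) (hipS (Classical.arbitrary _))
    have hgr : ξ * S ≤ |t| := hgreedy m
    have hB1 : A ≤ (∑ j ∈ (Jseq m)ᶜ, |β j|) * S := by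
      rw [hAdef, haD m, Finset.sum_mul]
      calc ∑ j ∈ (Jseq m)ᶜ, β j * ∫ ω, V m ω * X j ω ∂μ
          ≤ ∑ j ∈ (Jseq m)ᶜ, |β j * ∫ ω, V m ω * X j ω ∂μ| :=
            Finset.sum_le_sum fun j _ => le_abs_self _
        _ ≤ ∑ j ∈ (Jseq m)ᶜ, |β j| * S := Finset.sum_le_sum fun j _ => by
            rw [abs_mul]
            exact mul_le_mul_of_nonneg_left (hipS j) (abs_nonneg _)
    have hB2 : (∑ j ∈ (Jseq m)ᶜ, (β j)^2) ≤ A / lam₁ := by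
      rw [le_div_iff₀ hlam₁]
      calc (∑ j ∈ (Jseq m)ᶜ, (β j)^2) * lam₁ = lam₁ * ∑ j ∈ (Jseq m)ᶜ, (β j)^2 := by ring
        _ ≤ A := hquad m
    have hβc := hβ (Jseq m)ᶜ
    have hzc : (∑ j ∈ (Jseq m)ᶜ, (β j)^2) ^ γ ≤ (A / lam₁) ^ γ :=
      Real.rpow_le_rpow (Finset.sum_nonneg fun j _ => sq_nonneg _) hB2 hγ0
    have hAz : A ≤ (Cα * (A / lam₁) ^ γ) * S := by
      calc A ≤ (∑ j ∈ (Jseq m)ᶜ, |β j|) * S := hB1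
        _ ≤ (Cα * (∑ j ∈ (Jseq m)ᶜ, (β j)^2) ^ γ) * S :=
            mul_le_mul_of_nonneg_right hβc hS0
        _ ≤ (Cα * (A / lam₁) ^ γ) * S :=
            mul_le_mul_of_nonneg_right (mul_le_mul_of_nonneg_left hzc hCα.le) hS0
    set z : ℝ := Cα * (A / lam₁) ^ γ with hzdef
    have hz0 : 0 < z := mul_pos hCα (Real.rpow_pos_of_pos (by positivity) _)
    have hSlb : A / z ≤ S := by
      rw [div_le_iff₀ hz0]
      linarith [hAz]
    have htlb : ξ * (A / z) ≤ |t| :=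
      le_trans (mul_le_mul_of_nonneg_left hSlb hξ0.le) hgr
    have ht2 : (ξ * (A / z))^2 ≤ t^2 := by
      rw [← sq_abs t]
      exact pow_le_pow_left₀ (by positivity) htlb 2
    have hA2γ : (0:ℝ) < A ^ (2*γ) := Real.rpow_pos_of_pos hA _
    have e1 : ((A/lam₁) ^ γ)^2 = (A/lam₁) ^ (2*γ) := by
      rw [← Real.rpow_natCast ((A/lam₁)^γ) 2,
        ← Real.rpow_mul (le_of_lt (by positivity : (0:ℝ) < A/lam₁))]
      norm_num [mul_comm]
    have e2 : (A/lam₁) ^ (2*γ) = A^(2*γ) / lam₁^(2*γ) :=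
      Real.div_rpow hA.le hlam₁.le _
    have e3 : A^(1+1/r) = A^2 / A^(2*γ) := by
      rw [eq_div_iff (ne_of_gt hA2γ), ← Real.rpow_add hA, ← Real.rpow_natCast A 2]
      congr 1
      rw [hγdef, hrdef]
      have hne : 2 * α - 1 ≠ 0 := by linarith
      field_simp
      ring
    have halg : (ξ * (A / z))^2 = c * A ^ (1 + 1/r) := by
      have hzsq : z^2 = Cα^2 * (A^(2*γ) / lam₁^(2*γ)) := by
        rw [hzdef, mul_pow, e1, e2]
      rw [hcdef, e3, mul_pow, div_pow, hzsq]
      have hl2γ : (0:ℝ) < lam₁ ^ (2*γ) := Real.rpow_pos_of_pos hlam₁ _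
      field_simp
    calc ∫ ω, (V (m+1) ω)^2 ∂μ ≤ A - t^2 := hstep m
      _ ≤ A - (ξ * (A/z))^2 := by linarith [ht2]
      _ = A - c * A ^ (1+1/r) := by rw [halg]
  have hmono : ∀ m, ∫ ω, (V (m+1) ω)^2 ∂μ ≤ ∫ ω, (V m ω)^2 ∂μ :=
    fun m => (hstep m).trans (sub_le_self _ (sq_nonneg _))
  exact fun m hm =>
    rate_lemma (fun k => ∫ ω, (V k ω)^2 ∂μ) c r hc0 hr1.le ha0 hmono hrec m hm
end

section
/- Let X = (X_1, …, X_p) be a square-integrable random vector in R^p with E[X_j²] = 1 for all j and λ_min(E[X X']) ≥ λ₁ > 0. Let α > 1 and C_α > 0, and let β ∈ R^p satisfy the polynomial-decay class condition: ‖β(J)‖₁ ≤ C_α (‖β(J)‖₂²)^{(α−1)/(2α−1)} for every J ⊆ {1, …, p}. Let D = Σ_{j=1}^p β_j X_j, fix ξ ∈ (0,1], and let (J_m, V_m)_{m ≥ 0} be the population weak orthogonal greedy sequence: V_0 = D, J_0 = ∅, and for m ≥ 1, J_m = J_{m−1} ∪ {j_m} with |E[V_{m−1} X_{j_m}]| ≥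 ξ max_{1≤ℓ≤p} |E[V_{m−1} X_ℓ]|, and V_m = D − P_{J_m} D, where P_{J_m} is the orthogonal projection in L² onto span{X_j : j ∈ J_m}. Then for every m ≥ 0, E[V_{m+1}²] ≤ E[V_m²] · ( 1 − ξ² λ₁^{2(α−1)/(2α−1)} C_α^{−2} ( E[V_m²] )^{1/(2α−1)} ). -/
open MeasureTheory ProbabilityTheory Finset

lemma aux_mul_integrable {Ω : Type*} [MeasurableSpace Ω] {μ : Measure Ω} {f g : Ω → ℝ}
    (hf : MemLp f 2 μ) (hg : MemLp g 2 μ) : Integrable (fun ω => f ω * g ω) μ := by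
  rw [← memLp_one_iff_integrable]
  have h := hg.smul (φ := f) hf (p := 2) (q := 2) (r := 1)
  exact h

open Matrix in
lemma aux_quad_lower {n : ℕ} {A : Matrix (Fin n) (Fin n) ℝ} (hA : A.IsHermitian) {c : ℝ}
    (hc : ∀ i, c ≤ hA.eigenvalues i) (x : Fin n → ℝ) :
    c * (∑ i, x i * x i) ≤ ∑ j, x j * ∑ k, A j k * x k := by
  have hU := (Matrix.mem_unitaryGroup_iff).mp (hA.eigenvectorUnitary).2
  have h1 : A - c • 1 = (hA.eigenvectorUnitary : Matrix (Fin n) (Fin n) ℝ) *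
      Matrix.diagonal (fun i => hA.eigenvalues i - c) *
      ((hA.eigenvectorUnitary : Matrix (Fin n) (Fin n) ℝ))ᴴ := by
    have h2 : Matrix.diagonal (fun i => hA.eigenvalues i - c)
        = Matrix.diagonal (RCLike.ofReal ∘ hA.eigenvalues) - c • (1 : Matrix (Fin n) (Fin n) ℝ) := by
      rw [Matrix.smul_one_eq_diagonal, ← Matrix.diagonal_sub]
      rfl
    rw [h2, Matrix.mul_sub, Matrix.sub_mul, ← Matrix.star_eq_conjTranspose]
    rw [Matrix.mul_smul, Matrix.smul_mul, mul_one, hU]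
    nth_rw 1 [hA.spectral_theorem]
    simp [Unitary.conjStarAlgAut_apply]
  have hB : (A - c • 1).PosSemidef := by
    rw [h1]
    exact (Matrix.posSemidef_diagonal_iff.mpr fun i =>
      sub_nonneg.2 (hc i)).mul_mul_conjTranspose_same _
  have h3 := hB.dotProduct_mulVec_nonneg x
  have e1 : dotProduct (star x) ((A - c • 1) *ᵥ x)
      = (∑ j, x j * ∑ k, A j k * x k) - c * ∑ i, x i * x i := by
    rw [Matrix.sub_mulVec, dotProduct_sub, Matrix.smul_mulVec,
      Matrix.one_mulVec, dotProduct_smul, star_trivial]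
    simp [dotProduct, Matrix.mulVec, smul_eq_mul]
  rw [e1] at h3
  linarith

/-- One-step contraction (display (A.7) in the proof of Theorem 2): under
`E[Xⱼ²] = 1`, `λ_min(E[XX']) ≥ λ₁ > 0`, and the polynomial-decay class condition on
`β`, the residuals of the population weak orthogonal greedy algorithm with weakness
parameter `ξ` satisfy, for every `m ≥ 0`,
`E[V_{m+1}²] ≤ E[V_m²] (1 − ξ² λ₁^{2(α−1)/(2α−1)} C_α^{−2} (E[V_m²])^{1/(2α−1)})`. -/
theorem stmt_16 (p : ℕ) (hp : 0 < p)
    (Ω : Type*) [MeasurableSpace Ω] (μ : Measure Ω) [IsProbabilityMeasure μ]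
    (X : Fin p → Ω → ℝ) (hX : ∀ j, MemLp (X j) 2 μ)
    (hXnorm : ∀ j, ∫ ω, (X j ω) ^ 2 ∂μ = 1)
    (Γ : Matrix (Fin p) (Fin p) ℝ)
    (hΓdef : ∀ j k, Γ j k = ∫ ω, X j ω * X k ω ∂μ)
    (hΓ : Γ.IsHermitian)
    (lam₁ : ℝ) (hlam₁ : 0 < lam₁) (hmin : lam₁ ≤ ⨅ i, hΓ.eigenvalues i)
    (α Cα : ℝ) (hα : 1 < α) (hCα : 0 < Cα)
    (β : Fin p → ℝ)
    (hclass : ∀ J : Finset (Fin p),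
      ∑ j ∈ J, |β j| ≤ Cα * (∑ j ∈ J, (β j) ^ 2) ^ ((α - 1) / (2 * α - 1)))
    (D : Ω → ℝ) (hD : ∀ ω, D ω = ∑ j : Fin p, β j * X j ω)
    (ξ : ℝ) (hξ0 : 0 < ξ) (hξ1 : ξ ≤ 1)
    (Jseq : ℕ → Finset (Fin p)) (jsel : ℕ → Fin p) (V : ℕ → Ω → ℝ)
    (hJ0 : Jseq 0 = ∅)
    (hV0 : ∀ ω, V 0 ω = D ω)
    (hJrec : ∀ m : ℕ, Jseq (m + 1) = insert (jsel m) (Jseq m))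
    (hsel : ∀ m : ℕ, ξ * ⨆ l : Fin p, |∫ ω, V m ω * X l ω ∂μ|
        ≤ |∫ ω, V m ω * X (jsel m) ω ∂μ|)
    (hVspan : ∀ m : ℕ, ∃ c : Fin p → ℝ,
      ∀ ω, V m ω = D ω - ∑ j ∈ Jseq m, c j * X j ω)
    (hVorth : ∀ m : ℕ, ∀ j ∈ Jseq m, ∫ ω, V m ω * X j ω ∂μ = 0) :
    ∀ m : ℕ,
      ∫ ω, (V (m + 1) ω) ^ 2 ∂μ
        ≤ (∫ ω, (V m ω) ^ 2 ∂μ) *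
            (1 - ξ ^ 2 * lam₁ ^ (2 * (α - 1) / (2 * α - 1)) * Cα⁻¹ ^ 2 *
              (∫ ω, (V m ω) ^ 2 ∂μ) ^ (1 / (2 * α - 1))) := by
  intro m
  -- representation of V n as a linear combination of the X j
  have hrep : ∀ n : ℕ, ∃ γ : Fin p → ℝ,
      (∀ ω, V n ω = ∑ j, γ j * X j ω) ∧ ∀ j ∉ Jseq n, γ j = β j := by
    intro n
    obtain ⟨c, hc⟩ := hVspan n
    refine ⟨fun j => β j - if j ∈ Jseq n then c j else 0, fun ω => ?_, fun j hj => by simp [hj]⟩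
    rw [hc ω, hD ω]
    simp_rw [sub_mul, Finset.sum_sub_distrib, ite_mul, zero_mul]
    rw [Finset.sum_ite_mem, Finset.univ_inter]
  obtain ⟨γ, hγ, hγβ⟩ := hrep m
  have hMem : ∀ (s : Finset (Fin p)) (δ : Fin p → ℝ),
      MemLp (fun ω => ∑ j ∈ s, δ j * X j ω) 2 μ := fun s δ =>
    memLp_finset_sum s (fun j _ => (hX j).const_mul (δ j))
  have hVmL : MemLp (V m) 2 μ := by
    rw [show V m = fun ω => ∑ j, γ j * X j ω from funext hγ]; exact hMem _ γ
  have hV1L : MemLp (V (m+1)) 2 μ := by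
    obtain ⟨γ', hγ', _⟩ := hrep (m+1)
    rw [show V (m+1) = fun ω => ∑ j, γ' j * X j ω from funext hγ']; exact hMem _ γ'
  -- integral of g times a combination
  have hsum_int : ∀ (s : Finset (Fin p)) (d : Fin p → ℝ) (g : Ω → ℝ), MemLp g 2 μ →
      ∫ ω, g ω * (∑ j ∈ s, d j * X j ω) ∂μ = ∑ j ∈ s, d j * ∫ ω, g ω * X j ω ∂μ := by
    intro s d g hg
    have h1 : ∀ ω, g ω * (∑ j ∈ s, d j * X j ω) = ∑ j ∈ s, d j * (g ω * X j ω) := by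
      intro ω; rw [Finset.mul_sum]; exact Finset.sum_congr rfl (fun j _ => by ring)
    simp_rw [h1]
    rw [integral_finset_sum s (fun j _ => (aux_mul_integrable hg (hX j)).const_mul (d j))]
    exact Finset.sum_congr rfl fun j _ => integral_const_mul _ _
  set Em := ∫ ω, (V m ω) ^ 2 ∂μ with hEmdef
  have hEm_nonneg : 0 ≤ Em := integral_nonneg fun ω => sq_nonneg _
  have hEmm : ∫ ω, V m ω * V m ω ∂μ = Em := by
    rw [hEmdef]; exact integral_congr_ae (.of_forall fun ω => (pow_two (V m ω)).symm)
  -- cross moments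
  have htl : ∀ l, ∫ ω, V m ω * X l ω ∂μ = ∑ j, γ j * Γ j l := by
    intro l
    have h1 : ∀ ω, V m ω * X l ω = X l ω * (∑ j, γ j * X j ω) := fun ω => by
      rw [hγ ω]; ring
    simp_rw [h1]
    rw [hsum_int Finset.univ γ (X l) (hX l)]
    exact Finset.sum_congr rfl fun j _ => by
      rw [hΓdef j l]
      congr 1
      exact integral_congr_ae (.of_forall fun ω => mul_comm _ _)
  have hΓsymm : ∀ j k, Γ j k = Γ k j := fun j k => by
    rw [hΓdef j k, hΓdef k j]
    exact integral_congr_ae (.of_forall fun ω => mul_comm _ _)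
  -- Em as quadratic form / as pairing with β
  have hEmγ : Em = ∑ j, γ j * ∫ ω, V m ω * X j ω ∂μ := by
    have h1 : ∀ ω, V m ω * V m ω = V m ω * (∑ j, γ j * X j ω) := fun ω => by rw [← hγ ω]
    rw [← hEmm]
    calc ∫ ω, V m ω * V m ω ∂μ = ∫ ω, V m ω * (∑ j, γ j * X j ω) ∂μ :=
          integral_congr_ae (.of_forall h1)
      _ = ∑ j, γ j * ∫ ω, V m ω * X j ω ∂μ := hsum_int Finset.univ γ (V m) hVmL
  -- eigenvalue lower bound
  have hEig : lam₁ * ∑ j, γ j * γ j ≤ Em := by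
    have h4 : ∀ i, lam₁ ≤ hΓ.eigenvalues i := fun i =>
      hmin.trans (ciInf_le (Set.Finite.bddBelow (Set.finite_range _)) i)
    have h5 := aux_quad_lower hΓ h4 γ
    have h6 : Em = ∑ j, γ j * ∑ k, Γ j k * γ k := by
      rw [hEmγ]
      refine Finset.sum_congr rfl fun j _ => ?_
      rw [htl j]
      congr 1
      exact Finset.sum_congr rfl fun k _ => by rw [hΓsymm k j]; ring
    linarith
  -- Em = sum over complement of β_j times cross moments
  have hEmc : Em = ∑ j ∈ (Jseq m)ᶜ, β j * ∫ ω, V m ω * X j ω ∂μ := by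
    rw [hEmγ, ← Finset.sum_compl_add_sum (Jseq m)
      (fun j => γ j * ∫ ω, V m ω * X j ω ∂μ)]
    have h7 : ∑ j ∈ Jseq m, γ j * ∫ ω, V m ω * X j ω ∂μ = 0 :=
      Finset.sum_eq_zero fun j hj => by rw [hVorth m j hj, mul_zero]
    rw [h7, add_zero]
    exact Finset.sum_congr rfl fun j hj => by rw [hγβ j (Finset.mem_compl.mp hj)]
  -- the sup of cross moments
  set S := ⨆ l : Fin p, |∫ ω, V m ω * X l ω ∂μ| with hSdef
  have hSb : ∀ l, |∫ ω, V m ω * X l ω ∂μ| ≤ S := fun l => by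
    rw [hSdef]
    exact le_ciSup (Set.Finite.bddAbove
      (Set.finite_range (fun l : Fin p => |∫ ω, V m ω * X l ω ∂μ|))) l
  have hS0 : 0 ≤ S := le_trans (abs_nonneg _) (hSb (jsel m))
  have hselm := hsel m
  -- Em bounded using the class condition
  have hEmS : Em ≤ (∑ j ∈ (Jseq m)ᶜ, |β j|) * S := by
    rw [hEmc, Finset.sum_mul]
    refine Finset.sum_le_sum fun j _ => ?_
    calc β j * ∫ ω, V m ω * X j ω ∂μ ≤ |β j * ∫ ω, V m ω * X j ω ∂μ| := le_abs_self _
      _ = |β j| * |∫ ω, V m ω * X j ω ∂μ| := abs_mul _ _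
      _ ≤ |β j| * S := mul_le_mul_of_nonneg_left (hSb j) (abs_nonneg _)
  have hB2 : lam₁ * ∑ j ∈ (Jseq m)ᶜ, (β j) ^ 2 ≤ Em := by
    refine le_trans ?_ hEig
    refine mul_le_mul_of_nonneg_left ?_ hlam₁.le
    calc ∑ j ∈ (Jseq m)ᶜ, (β j) ^ 2 = ∑ j ∈ (Jseq m)ᶜ, γ j * γ j :=
          Finset.sum_congr rfl fun j hj => by
            rw [← hγβ j (Finset.mem_compl.mp hj), pow_two]
      _ ≤ ∑ j, γ j * γ j :=
          Finset.sum_le_sum_of_subset_of_nonneg (Finset.subset_univ _)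
            (fun j _ _ => mul_self_nonneg _)
  -- one-step decrease
  set a := ∫ ω, V m ω * X (jsel m) ω ∂μ with hadef
  have hstep : ∫ ω, (V (m + 1) ω) ^ 2 ∂μ ≤ Em - a ^ 2 := by
    obtain ⟨c, hc⟩ := hVspan m
    obtain ⟨c', hc'⟩ := hVspan (m+1)
    set j0 := jsel m with hj0def
    set W := fun ω => V m ω - a * X j0 ω with hWdef
    have hWL : MemLp W 2 μ := hVmL.sub ((hX j0).const_mul a)
    set U := fun ω => W ω - V (m+1) ω with hUdef
    have hUL : MemLp U 2 μ := hWL.sub hV1L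
    have hj0mem : j0 ∈ Jseq (m+1) := by rw [hJrec m]; exact Finset.mem_insert_self _ _
    have hsubs : Jseq m ⊆ Jseq (m+1) := by rw [hJrec m]; exact Finset.subset_insert _ _
    have hUorth : ∫ ω, V (m+1) ω * U ω ∂μ = 0 := by
      have h5 : ∀ ω, V (m+1) ω * U ω
          = V (m+1) ω * (∑ j ∈ Jseq (m+1), c' j * X j ω)
            - (V (m+1) ω * (∑ j ∈ Jseq m, c j * X j ω)
               + a * (V (m+1) ω * X j0 ω)) := by
        intro ω
        simp only [hUdef, hWdef]
        rw [hc ω, hc' ω]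
        ring
      have I1 : Integrable (fun ω => V (m+1) ω * (∑ j ∈ Jseq (m+1), c' j * X j ω)) μ :=
        aux_mul_integrable hV1L (hMem _ c')
      have I2 : Integrable (fun ω => V (m+1) ω * (∑ j ∈ Jseq m, c j * X j ω)) μ :=
        aux_mul_integrable hV1L (hMem _ c)
      have I3 : Integrable (fun ω => V (m+1) ω * X j0 ω) μ :=
        aux_mul_integrable hV1L (hX j0)
      calc ∫ ω, V (m+1) ω * U ω ∂μ
          = ∫ ω, (V (m+1) ω * (∑ j ∈ Jseq (m+1), c' j * X j ω)
            - (V (m+1) ω * (∑ j ∈ Jseq m, c j * X j ω)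
               + a * (V (m+1) ω * X j0 ω))) ∂μ := integral_congr_ae (.of_forall h5)
        _ = (∫ ω, V (m+1) ω * (∑ j ∈ Jseq (m+1), c' j * X j ω) ∂μ)
            - ((∫ ω, V (m+1) ω * (∑ j ∈ Jseq m, c j * X j ω) ∂μ)
               + a * ∫ ω, V (m+1) ω * X j0 ω ∂μ) := by
            have I4 : Integrable (fun ω => V (m+1) ω * (∑ j ∈ Jseq m, c j * X j ω)
                + a * (V (m+1) ω * X j0 ω)) μ := I2.add (I3.const_mul a)
            have I5 : Integrable (fun ω => a * (V (m+1) ω * X j0 ω)) μ := I3.const_mul a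
            rw [integral_sub I1 I4, integral_add I2 I5, integral_const_mul]
        _ = 0 := by
            rw [hsum_int _ c' _ hV1L, hsum_int _ c _ hV1L]
            rw [Finset.sum_eq_zero fun j hj => by rw [hVorth (m+1) j hj, mul_zero],
              Finset.sum_eq_zero fun j hj => by rw [hVorth (m+1) j (hsubs hj), mul_zero],
              hVorth (m+1) j0 hj0mem]
            ring
    have hintW : ∫ ω, W ω * W ω ∂μ = Em - a * a := by
      have h6 : ∀ ω, W ω * W ω = V m ω * V m ω - (2*a) * (V m ω * X j0 ω)
          + (a*a) * (X j0 ω * X j0 ω) := fun ω => by simp only [hWdef]; ring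
      have I1 : Integrable (fun ω => V m ω * V m ω) μ := aux_mul_integrable hVmL hVmL
      have I2 : Integrable (fun ω => V m ω * X j0 ω) μ := aux_mul_integrable hVmL (hX j0)
      have I3 : Integrable (fun ω => X j0 ω * X j0 ω) μ :=
        aux_mul_integrable (hX j0) (hX j0)
      have hXj0 : ∫ ω, X j0 ω * X j0 ω ∂μ = 1 := by
        rw [← hXnorm j0]
        exact integral_congr_ae (.of_forall fun ω => (pow_two (X j0 ω)).symm)
      calc ∫ ω, W ω * W ω ∂μ
          = ∫ ω, (V m ω * V m ω - (2*a) * (V m ω * X j0 ω)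
              + (a*a) * (X j0 ω * X j0 ω)) ∂μ := integral_congr_ae (.of_forall h6)
        _ = (∫ ω, V m ω * V m ω ∂μ) - (2*a) * (∫ ω, V m ω * X j0 ω ∂μ)
              + (a*a) * ∫ ω, X j0 ω * X j0 ω ∂μ := by
            have I4 : Integrable (fun ω => V m ω * V m ω - 2 * a * (V m ω * X j0 ω)) μ :=
              I1.sub (I2.const_mul (2*a))
            have I5 : Integrable (fun ω => a * a * (X j0 ω * X j0 ω)) μ := I3.const_mul (a*a)
            have I6 : Integrable (fun ω => 2 * a * (V m ω * X j0 ω)) μ := I2.const_mul (2*a)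
            rw [integral_add I4 I5, integral_sub I1 I6, integral_const_mul, integral_const_mul]
        _ = Em - a * a := by rw [hEmm, hXj0, ← hadef]; ring
    have hle : ∫ ω, V (m+1) ω * V (m+1) ω ∂μ ≤ ∫ ω, W ω * W ω ∂μ := by
      have h7 : ∀ ω, W ω * W ω = V (m+1) ω * V (m+1) ω
          + (2 * (V (m+1) ω * U ω) + U ω * U ω) := fun ω => by simp only [hUdef]; ring
      have I1 : Integrable (fun ω => V (m+1) ω * V (m+1) ω) μ := aux_mul_integrable hV1L hV1L
      have I2 : Integrable (fun ω => V (m+1) ω * U ω) μ := aux_mul_integrable hV1L hUL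
      have I3 : Integrable (fun ω => U ω * U ω) μ := aux_mul_integrable hUL hUL
      have h8 : ∫ ω, W ω * W ω ∂μ = (∫ ω, V (m+1) ω * V (m+1) ω ∂μ)
          + (2 * (∫ ω, V (m+1) ω * U ω ∂μ) + ∫ ω, U ω * U ω ∂μ) := by
        calc ∫ ω, W ω * W ω ∂μ
            = ∫ ω, (V (m+1) ω * V (m+1) ω
                + (2 * (V (m+1) ω * U ω) + U ω * U ω)) ∂μ :=
              integral_congr_ae (.of_forall h7)
          _ = _ := by
              have I4 : Integrable (fun ω => 2 * (V (m+1) ω * U ω) + U ω * U ω) μ :=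
                (I2.const_mul 2).add I3
              have I5 : Integrable (fun ω => 2 * (V (m+1) ω * U ω)) μ := I2.const_mul 2
              rw [integral_add I1 I4, integral_add I5 I3, integral_const_mul]
      have h9 : 0 ≤ ∫ ω, U ω * U ω ∂μ := integral_nonneg fun ω => mul_self_nonneg _
      rw [h8, hUorth]
      linarith
    calc ∫ ω, (V (m + 1) ω) ^ 2 ∂μ = ∫ ω, V (m+1) ω * V (m+1) ω ∂μ :=
          integral_congr_ae (.of_forall fun ω => pow_two _)
      _ ≤ ∫ ω, W ω * W ω ∂μ := hle
      _ = Em - a * a := hintW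
      _ = Em - a ^ 2 := by ring
  rw [← hSdef] at hselm
  rcases eq_or_lt_of_le hEm_nonneg with hEm0 | hEmpos
  · rw [← hEm0, zero_mul]
    have h1 := hstep
    rw [← hEm0] at h1
    nlinarith [sq_nonneg a]
  · set κ := (α - 1) / (2 * α - 1) with hκdef
    have h2α : (0:ℝ) < 2 * α - 1 := by linarith
    have hne : (2 * α - 1) ≠ 0 := ne_of_gt h2α
    have hκpos : 0 < κ := div_pos (by linarith) h2α
    have hB2' : ∑ j ∈ (Jseq m)ᶜ, (β j) ^ 2 ≤ Em / lam₁ :=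
      (le_div_iff₀ hlam₁).mpr (by rw [mul_comm]; exact hB2)
    have hB2nn : 0 ≤ ∑ j ∈ (Jseq m)ᶜ, (β j) ^ 2 := Finset.sum_nonneg fun j _ => sq_nonneg _
    have hchain : Em ≤ (Cα * (Em / lam₁) ^ κ) * S := by
      refine hEmS.trans (mul_le_mul_of_nonneg_right ?_ hS0)
      refine (hclass (Jseq m)ᶜ).trans ?_
      exact mul_le_mul_of_nonneg_left (Real.rpow_le_rpow hB2nn hB2' hκpos.le) hCα.le
    have hPpos : 0 < Cα * (Em / lam₁) ^ κ :=
      mul_pos hCα (Real.rpow_pos_of_pos (div_pos hEmpos hlam₁) _)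
    have hKS : lam₁ ^ κ * Cα⁻¹ * Em ^ (α / (2 * α - 1)) ≤ S := by
      have h1 : Em / (Cα * (Em / lam₁) ^ κ) ≤ S := by
        rw [div_le_iff₀ hPpos]
        calc Em ≤ (Cα * (Em / lam₁) ^ κ) * S := hchain
          _ = S * (Cα * (Em / lam₁) ^ κ) := by ring
      refine le_trans (le_of_eq ?_) h1
      have hl : (0:ℝ) < lam₁ ^ κ := Real.rpow_pos_of_pos hlam₁ _
      have hEκ : (0:ℝ) < Em ^ κ := Real.rpow_pos_of_pos hEmpos _
      rw [Real.div_rpow hEm_nonneg hlam₁.le]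
      rw [show α / (2 * α - 1) = 1 - κ by
        rw [hκdef, eq_sub_iff_add_eq, ← add_div, div_eq_one_iff_eq hne]; ring]
      rw [Real.rpow_sub hEmpos, Real.rpow_one]
      field_simp
    have hK0 : 0 ≤ lam₁ ^ κ * Cα⁻¹ * Em ^ (α / (2 * α - 1)) := by positivity
    have haS : (ξ * S) ^ 2 ≤ a ^ 2 := by
      rw [← sq_abs a]
      exact pow_le_pow_left₀ (mul_nonneg hξ0.le hS0) hselm 2
    have hfinal : Em * (ξ ^ 2 * lam₁ ^ (2 * (α - 1) / (2 * α - 1)) * Cα⁻¹ ^ 2 *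
        Em ^ (1 / (2 * α - 1))) ≤ a ^ 2 := by
      have e1 : Em * (ξ ^ 2 * lam₁ ^ (2 * (α - 1) / (2 * α - 1)) * Cα⁻¹ ^ 2 *
          Em ^ (1 / (2 * α - 1)))
          = ξ ^ 2 * (lam₁ ^ κ * Cα⁻¹ * Em ^ (α / (2 * α - 1))) ^ 2 := by
        rw [mul_pow, mul_pow]
        rw [← Real.rpow_natCast (lam₁ ^ κ) 2, ← Real.rpow_mul hlam₁.le]
        rw [← Real.rpow_natCast (Em ^ (α / (2 * α - 1))) 2, ← Real.rpow_mul hEm_nonneg]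
        rw [show κ * ((2:ℕ):ℝ) = 2 * (α - 1) / (2 * α - 1) by rw [hκdef]; push_cast; ring]
        rw [show (α / (2 * α - 1)) * ((2:ℕ):ℝ) = 1 + 1 / (2 * α - 1) by
          push_cast; rw [div_mul_eq_mul_div, one_add_div hne]; congr 1; ring]
        rw [Real.rpow_add hEmpos, Real.rpow_one]
        ring
      rw [e1]
      calc ξ ^ 2 * (lam₁ ^ κ * Cα⁻¹ * Em ^ (α / (2 * α - 1))) ^ 2
          ≤ ξ ^ 2 * S ^ 2 :=
            mul_le_mul_of_nonneg_left (pow_le_pow_left₀ hK0 hKS 2) (sq_nonneg ξ)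
        _ = (ξ * S) ^ 2 := by ring
        _ ≤ a ^ 2 := haS
    rw [mul_one_sub]
    linarith [hstep, hfinal]
end
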